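/- arXiv:1504.00706 — 4 statements merged into one kernel-verified Lean document; each statement's English description precedes it below -/
import Mathlib

section
/- Let q₀ ≥ 0 and δ > 0. Let φ : [0,∞) → [0,∞) be a continuous function of the form φ(t) = q₀ + ∫₀^t ξ(s) ds + l(t) for all t ≥ 0, where ξ : [0,∞) → ℝ is Borel measurable, locally integrable, and satisfies ξ(t) ≤ −δ for Lebesgue-almost every t ≥ 0, and where l : [0,∞) → ℝ is continuous, nondecreasing, l(0) = 0, and the Lebesgue–Stieltjes measure induced by l assigns zero mass to the set {t ≥ 0 : φ(t) > 0} (equivalently, ∫₀^∞ φ(t) dl(t) = 0). Then φ(t) = 0 for all t ≥ q₀/δ. -/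
open Filter MeasureTheory
open Topology

/-- one-dimensional hitting-time bound for reflected trajectories with
drift bounded above by `-δ`: the trajectory `φ(t) = q₀ + ∫₀^t ξ(s) ds + l(t)` is
absorbed at `0` from time `q₀/δ` on. -/
theorem reflected_trajectory_absorbed (q₀ δ : ℝ) (φ ξ l : ℝ → ℝ)
    (hq₀ : 0 ≤ q₀) (hδ : 0 < δ)
    (hφ_cont : ContinuousOn φ (Set.Ici 0))
    (hφ_nonneg : ∀ t, 0 ≤ t → 0 ≤ φ t)
    (hξ_meas : Measurable ξ)
    (hξ_loc : ∀ T : ℝ, IntegrableOn ξ (Set.Icc 0 T))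
    (hξ_bound : ∀ᵐ t ∂(volume.restrict (Set.Ici (0:ℝ))), ξ t ≤ -δ)
    (hl_cont : ContinuousOn l (Set.Ici 0))
    (hl_mono : MonotoneOn l (Set.Ici 0))
    (hl_zero : l 0 = 0)
    (heq : ∀ t, 0 ≤ t → φ t = q₀ + (∫ s in Set.Ioc (0:ℝ) t, ξ s) + l t)
    (hflat : ∀ a b, 0 ≤ a → a ≤ b → (∀ t ∈ Set.Icc a b, 0 < φ t) → l a = l b) :
    ∀ t, q₀ / δ ≤ t → φ t = 0 := by
  -- integrability on Ioc a b for 0 ≤ a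
  have hInt : ∀ a b : ℝ, 0 ≤ a → IntegrableOn ξ (Set.Ioc a b) := by
    intro a b ha
    exact (hξ_loc b).mono_set
      (Set.Ioc_subset_Icc_self.trans (Set.Icc_subset_Icc_left ha))
  -- integral bound
  have hbound : ∀ a b : ℝ, 0 ≤ a → a ≤ b → (∫ s in Set.Ioc a b, ξ s) ≤ -δ * (b - a) := by
    intro a b ha hab
    have hsub : Set.Ioc a b ⊆ Set.Ici (0:ℝ) := fun x hx => le_trans ha hx.1.le
    have hae : ∀ᵐ s ∂(volume.restrict (Set.Ioc a b)), ξ s ≤ -δ :=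
      ae_restrict_of_ae_restrict_of_subset hsub hξ_bound
    have hconst : IntegrableOn (fun _ : ℝ => -δ) (Set.Ioc a b) := by
      refine integrableOn_const ?_
      simp [Real.volume_Ioc]
    calc (∫ s in Set.Ioc a b, ξ s) ≤ ∫ _ in Set.Ioc a b, (-δ) :=
          integral_mono_ae (hInt a b ha) hconst hae
      _ = -δ * (b - a) := by
          rw [setIntegral_const]
          simp [Real.volume_Ioc, ENNReal.toReal_ofReal (sub_nonneg.2 hab), mul_comm, hab]
  -- decomposition
  have hdecomp : ∀ a b : ℝ, 0 ≤ a → a ≤ b →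
      φ b = φ a + (∫ s in Set.Ioc a b, ξ s) + (l b - l a) := by
    intro a b ha hab
    have hb : 0 ≤ b := ha.trans hab
    have hadd : (∫ s in Set.Ioc 0 b, ξ s)
        = (∫ s in Set.Ioc 0 a, ξ s) + (∫ s in Set.Ioc a b, ξ s) := by
      rw [← Set.Ioc_union_Ioc_eq_Ioc ha hab]
      exact setIntegral_union (Set.Ioc_disjoint_Ioc_of_le le_rfl) measurableSet_Ioc
        (hInt 0 a le_rfl) (hInt a b ha)
    rw [heq a ha, heq b hb, hadd]; ring
  intro t ht
  have ht0 : 0 ≤ t := le_trans (div_nonneg hq₀ hδ.le) ht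
  have hqt : q₀ ≤ δ * t := by
    have := (div_le_iff₀ hδ).mp ht
    linarith
  by_contra hne
  have hpos : 0 < φ t := lt_of_le_of_ne (hφ_nonneg t ht0) (Ne.symm hne)
  set S : Set ℝ := Set.Icc 0 t ∩ φ ⁻¹' {0} with hSdef
  by_cases hS : S.Nonempty
  · -- σ = last zero before t
    have hScl : IsClosed S :=
      (hφ_cont.mono (fun x hx => hx.1 : Set.Icc (0:ℝ) t ⊆ Set.Ici 0)).preimage_isClosed_of_isClosed
        isClosed_Icc isClosed_singleton
    have hScomp : IsCompact S := isCompact_Icc.of_isClosed_subset hScl Set.inter_subset_left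
    have hσmem : sSup S ∈ S := hScomp.sSup_mem hS
    set σ := sSup S with hσdef
    have hσIcc : σ ∈ Set.Icc 0 t := hσmem.1
    have hσ0 : φ σ = 0 := hσmem.2
    have hσlt : σ < t := lt_of_le_of_ne hσIcc.2 (fun h => hne (h ▸ hσ0))
    have hbdd : BddAbove S := hScomp.bddAbove
    have hpos' : ∀ s ∈ Set.Ioc σ t, 0 < φ s := by
      intro s hs
      rcases (hφ_nonneg s (le_trans hσIcc.1 hs.1.le)).lt_or_eq with h | h
      · exact h
      · exact absurd (le_csSup hbdd ⟨⟨le_trans hσIcc.1 hs.1.le, hs.2⟩, h.symm⟩)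
          (not_le.2 hs.1)
    have hkey : ∀ s ∈ Set.Ioc σ t, φ t + δ * (t - s) ≤ φ s := by
      intro s hs
      have hs0 : 0 ≤ s := le_trans hσIcc.1 hs.1.le
      have hlf : l s = l t := hflat s t hs0 hs.2
        (fun u hu => hpos' u ⟨lt_of_lt_of_le hs.1 hu.1, hu.2⟩)
      have hd := hdecomp s t hs0 hs.2
      have hb := hbound s t hs0 hs.2
      rw [hlf] at hd
      linarith
    have hneb : (𝓝[Set.Ioc σ t] σ).NeBot :=
      mem_closure_iff_nhdsWithin_neBot.mp
        (by rw [closure_Ioc hσlt.ne]; exact ⟨le_rfl, hσlt.le⟩)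
    have hten : Tendsto φ (𝓝[Set.Ioc σ t] σ) (𝓝 0) := by
      have h1 : Tendsto φ (𝓝[Set.Ici 0] σ) (𝓝 (φ σ)) := hφ_cont σ hσIcc.1
      rw [hσ0] at h1
      exact h1.mono_left (nhdsWithin_mono σ (fun x hx => le_trans hσIcc.1 hx.1.le))
    have h1 : Tendsto (fun s => φ t + δ * (t - s)) (𝓝[Set.Ioc σ t] σ)
        (𝓝 (φ t + δ * (t - σ))) := by
      have hc : Continuous (fun s : ℝ => φ t + δ * (t - s)) := continuous_const.add (continuous_const.mul (continuous_const.sub continuous_id))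
      exact (hc.tendsto σ).mono_left nhdsWithin_le_nhds
    have hle : φ t + δ * (t - σ) ≤ 0 := by
      refine le_of_tendsto_of_tendsto h1 hten ?_
      filter_upwards [self_mem_nhdsWithin] with s hs using hkey s hs
    nlinarith
  · -- no zero on [0,t]
    have hl : l 0 = l t := hflat 0 t le_rfl ht0
      (fun u hu => lt_of_le_of_ne (hφ_nonneg u hu.1) (fun h => hS ⟨u, hu, h.symm⟩))
    have hd := heq t ht0
    have hb := hbound 0 t le_rfl ht0
    rw [← hl, hl_zero] at hd
    exact hne (le_antisymm (by linarith) (hφ_nonneg t ht0))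
end

section
/- Let h : [0,∞) → [0,∞) be Borel measurable and locally integrable, and let δ > 0 and b ∈ ℝ satisfy b − ∫₀^z h(u) du ≤ −δ for all z ≥ 0. Fix x ≥ 0 and let (z, l) be a solution of the one-sided nonlinear generalized regulator problem with hazard function h and input y(t) = x + b t. Then z(t) = 0 for all t ≥ x/δ. -/
/-- A pair `(z, l)` of continuous functions on `[0,∞)` solves the one-sided nonlinear
generalized regulator problem with hazard function `h` and input `y`:
(a) `z(t) = y(t) - ∫₀^t (∫₀^{z(s)} h(u) du) ds + l(t) ≥ 0` for all `t ≥ 0`;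
(b) `l` is nondecreasing, `l(0) = 0`, and `l` increases only at times where `z = 0`
(equivalently, `∫₀^∞ z(t) dl(t) = 0`). -/
structure IsRegulatorSolution (h y z l : ℝ → ℝ) : Prop where
  z_cont : ContinuousOn z (Set.Ici 0)
  l_cont : ContinuousOn l (Set.Ici 0)
  z_nonneg : ∀ t, 0 ≤ t → 0 ≤ z t
  eqn : ∀ t, 0 ≤ t →
    z t = y t - (∫ s in Set.Ioc (0:ℝ) t, ∫ u in Set.Ioc (0:ℝ) (z s), h u) + l t
  l_mono : MonotoneOn l (Set.Ici 0)
  l_zero : l 0 = 0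
  l_flat : ∀ a b, 0 ≤ a → a ≤ b → (∀ t ∈ Set.Icc a b, 0 < z t) → l a = l b

/-- if the state-dependent drift `b - ∫₀^z h(u) du` is bounded above by
`-δ < 0` uniformly in `z ≥ 0`, then the regulated trajectory with linear input
`y(t) = x + b t` is absorbed at zero by time `x/δ`. -/
theorem regulator_linear_input_absorbed (h : ℝ → ℝ) (δ b x : ℝ) (z l : ℝ → ℝ)
    (h_meas : Measurable h)
    (h_nonneg : ∀ u, 0 ≤ u → 0 ≤ h u)
    (h_loc : ∀ T : ℝ, MeasureTheory.IntegrableOn h (Set.Icc 0 T))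
    (hδ : 0 < δ)
    (hdrift : ∀ w, 0 ≤ w → (b - ∫ u in Set.Ioc (0:ℝ) w, h u) ≤ -δ)
    (hx : 0 ≤ x)
    (hsol : IsRegulatorSolution h (fun t => x + b * t) z l) :
    ∀ t, x / δ ≤ t → z t = 0 := by
  classical
  open MeasureTheory Set in
  -- notation: F w = ∫₀^w h
  set F : ℝ → ℝ := fun w => ∫ u in Set.Ioc (0:ℝ) w, h u with hFdef
  have hFint : ∀ w : ℝ, IntegrableOn h (Ioc 0 w) := fun w =>
    (h_loc w).mono_set Ioc_subset_Icc_self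
  have hFmono : Monotone F := by
    intro w w' hw
    refine setIntegral_mono_set (hFint w') ?_ ?_
    · filter_upwards [ae_restrict_mem measurableSet_Ioc] with u hu
      exact h_nonneg u hu.1.le
    · exact (Ioc_subset_Ioc_right hw).eventuallyLE
  have hFnonneg : ∀ w, 0 ≤ F w := fun w =>
    setIntegral_nonneg measurableSet_Ioc (fun u hu => h_nonneg u hu.1.le)
  have hFmeas : Measurable F := hFmono.measurable
  have hFge : ∀ w, 0 ≤ w → b + δ ≤ F w := by
    intro w hw; have := hdrift w hw; simp only [hFdef]; linarith
  -- integrability of s ↦ F (z s)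
  have hGint : ∀ T : ℝ, IntegrableOn (fun s => F (z s)) (Ioc 0 T) := by
    intro T
    rcases le_or_gt T 0 with hT | hT
    · rw [Ioc_eq_empty (not_lt.2 hT)]; exact integrableOn_empty
    · obtain ⟨C, hC⟩ := (isCompact_Icc (a := (0:ℝ)) (b := T)).exists_bound_of_continuousOn
        (hsol.z_cont.mono (Icc_subset_Ici_self))
      have hzmeas : AEMeasurable z (volume.restrict (Ioc (0:ℝ) T)) :=
        (hsol.z_cont.mono (fun u hu => hu.1.le)).aemeasurable measurableSet_Ioc
      have hGmeas : AEStronglyMeasurable (fun s => F (z s)) (volume.restrict (Ioc (0:ℝ) T)) :=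
        (hFmeas.comp_aemeasurable hzmeas).aestronglyMeasurable
      have hconst : IntegrableOn (fun _ : ℝ => F C) (Ioc 0 T) := by
        refine integrableOn_const ?_
        rw [Real.volume_Ioc]; exact ENNReal.ofReal_ne_top
      refine hconst.mono' hGmeas ?_
      filter_upwards [ae_restrict_mem measurableSet_Ioc] with s hs
      rw [Real.norm_eq_abs, abs_of_nonneg (hFnonneg _)]
      exact hFmono ((le_abs_self _).trans (hC s ⟨hs.1.le, hs.2⟩))
  -- key decrease estimate
  have key : ∀ a t : ℝ, 0 ≤ a → a < t → (∀ s ∈ Ioc a t, 0 < z s) →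
      z t ≤ z a - δ * (t - a) := by
    intro a t ha hat hpos
    -- l is flat on [a, t]
    have hlat : l t = l a := by
      have hsub : Ioc a t ⊆ Ici (0:ℝ) := fun u hu => le_trans ha hu.1.le
      have h1 : Filter.Tendsto l (nhdsWithin a (Ioc a t)) (nhds (l a)) :=
        (hsol.l_cont a ha).mono hsub
      have h2 : Filter.Tendsto l (nhdsWithin a (Ioc a t)) (nhds (l t)) := by
        refine Filter.Tendsto.congr' ?_ (tendsto_const_nhds (x := l t))
        filter_upwards [self_mem_nhdsWithin] with u hu
        exact (hsol.l_flat u t (le_trans ha hu.1.le) hu.2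
          (fun s hs => hpos s ⟨lt_of_lt_of_le hu.1 hs.1, hs.2⟩)).symm
      have hne : (nhdsWithin a (Ioc a t)).NeBot := by
        rw [nhdsWithin_Ioc_eq_nhdsGT hat]; infer_instance
      exact tendsto_nhds_unique h2 h1
    have hint_at : IntegrableOn (fun s => F (z s)) (Ioc a t) :=
      (hGint t).mono_set (Ioc_subset_Ioc_left ha)
    have hsplit : (∫ s in Ioc (0:ℝ) t, F (z s))
        = (∫ s in Ioc (0:ℝ) a, F (z s)) + ∫ s in Ioc a t, F (z s) := by
      rw [← MeasureTheory.setIntegral_union (Set.Ioc_disjoint_Ioc_of_le le_rfl) measurableSet_Ioc (hGint a) hint_at,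
        Ioc_union_Ioc_eq_Ioc ha hat.le]
    have hlower : (b + δ) * (t - a) ≤ ∫ s in Ioc a t, F (z s) := by
      have hconst : IntegrableOn (fun _ : ℝ => b + δ) (Ioc a t) := by
        refine integrableOn_const ?_
        rw [Real.volume_Ioc]; exact ENNReal.ofReal_ne_top
      have hmono : (∫ _ in Ioc a t, (b + δ)) ≤ ∫ s in Ioc a t, F (z s) :=
        setIntegral_mono_on hconst hint_at measurableSet_Ioc
          (fun s hs => hFge (z s) (hsol.z_nonneg s (le_trans ha hs.1.le)))
      rwa [setIntegral_const, Real.volume_real_Ioc,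
        max_eq_left (sub_nonneg.2 hat.le), smul_eq_mul, mul_comm] at hmono
    have eq_t := hsol.eqn t (le_trans ha hat.le)
    have eq_a := hsol.eqn a ha
    simp only [hFdef] at hsplit hlower eq_t eq_a
    have hring : (b + δ) * (t - a) = b * t - b * a + δ * (t - a) := by ring
    linarith
  -- z 0 = x
  have hz0 : z 0 = x := by
    have h0 := hsol.eqn 0 le_rfl
    simpa [Set.Ioc_self, hsol.l_zero] using h0
  intro t ht
  have ht0 : (0:ℝ) ≤ t := le_trans (div_nonneg hx hδ.le) ht
  have hxt : x ≤ t * δ := (div_le_iff₀ hδ).1 ht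
  by_contra hzt0
  have hztpos : 0 < z t := lt_of_le_of_ne (hsol.z_nonneg t ht0) (Ne.symm hzt0)
  set S : Set ℝ := {u | u ∈ Icc 0 t ∧ z u = 0} with hSdef
  by_cases hS : S.Nonempty
  · -- there is a last zero before t
    have hScl : IsClosed S := by
      have : S = Icc 0 t ∩ z ⁻¹' {0} := by
        ext u; simp [hSdef, Set.mem_inter_iff, and_comm]
      rw [this]
      exact ContinuousOn.preimage_isClosed_of_isClosed
        (hsol.z_cont.mono (Icc_subset_Ici_self)) isClosed_Icc isClosed_singleton
    have hScpt : IsCompact S :=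
      isCompact_Icc.of_isClosed_subset hScl (fun u hu => hu.1)
    have hmem : sSup S ∈ S := hScpt.sSup_mem hS
    set m := sSup S with hm
    have hmt : m < t := by
      rcases lt_or_eq_of_le hmem.1.2 with h' | h'
      · exact h'
      · exact absurd (h' ▸ hmem.2) hzt0
    have hbdd : BddAbove S := ⟨t, fun u hu => hu.1.2⟩
    have hpos : ∀ s ∈ Ioc m t, 0 < z s := by
      intro s hs
      refine lt_of_le_of_ne (hsol.z_nonneg s (le_trans hmem.1.1 hs.1.le)) ?_
      intro h'
      have : s ≤ m := le_csSup hbdd ⟨⟨le_trans hmem.1.1 hs.1.le, hs.2⟩, h'.symm⟩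
      exact absurd hs.1 (not_lt.2 this)
    have hkey := key m t hmem.1.1 hmt hpos
    rw [hmem.2] at hkey
    nlinarith [mul_pos hδ (sub_pos.2 hmt)]
  · -- no zero on [0, t]
    have ht0' : 0 < t := by
      rcases lt_or_eq_of_le ht0 with h' | h'
      · exact h'
      · exfalso
        apply hS
        refine ⟨0, ⟨⟨le_rfl, ht0⟩, ?_⟩⟩
        rw [hz0]
        nlinarith
    have hpos : ∀ s ∈ Ioc (0:ℝ) t, 0 < z s := by
      intro s hs
      refine lt_of_le_of_ne (hsol.z_nonneg s hs.1.le) ?_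
      intro h'
      exact hS ⟨s, ⟨hs.1.le, hs.2⟩, h'.symm⟩
    have hkey := key 0 t le_rfl ht0' hpos
    rw [hz0] at hkey
    nlinarith
end

section
/- Let h : [0,∞) → [0,∞) be Borel measurable and locally integrable. There exists a constant κ > 0 such that for any two continuous inputs y₁, y₂ : [0,∞) → ℝ with y₁(0) ≥ 0 and y₂(0) ≥ 0, any solutions (z₁, l₁) and (z₂, l₂) of the one-sided nonlinear generalized regulator problem for inputs y₁ and y₂ respectively, and every T ≥ 0: sup_{0 ≤ t ≤ T} |z₁(t) − z₂(t)| ≤ κ · sup_{0 ≤ t ≤ T} |y₁(t) − y₂(t)|. -/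
open Set MeasureTheory Filter Topology

lemma regAux_G_mono (h : ℝ → ℝ)
    (h_nonneg : ∀ u, 0 ≤ u → 0 ≤ h u)
    (h_loc : ∀ T : ℝ, MeasureTheory.IntegrableOn h (Set.Icc 0 T))
    {a b : ℝ} (ha : 0 ≤ a) (hab : a ≤ b) :
    (∫ u in Set.Ioc (0:ℝ) a, h u) ≤ ∫ u in Set.Ioc (0:ℝ) b, h u := by
  have hia : IntegrableOn h (Set.Ioc 0 a) := (h_loc b).mono_set
    (fun x hx => ⟨hx.1.le, hx.2.trans hab⟩)
  have hib : IntegrableOn h (Set.Ioc a b) := (h_loc b).mono_set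
    (fun x hx => ⟨ha.trans hx.1.le, hx.2⟩)
  have hsplit : (∫ u in Set.Ioc (0:ℝ) b, h u)
      = (∫ u in Set.Ioc (0:ℝ) a, h u) + ∫ u in Set.Ioc a b, h u := by
    rw [← MeasureTheory.setIntegral_union (Set.Ioc_disjoint_Ioc_of_le le_rfl) measurableSet_Ioc hia hib,
      Set.Ioc_union_Ioc_eq_Ioc ha hab]
  rw [hsplit]
  have : 0 ≤ ∫ u in Set.Ioc a b, h u :=
    MeasureTheory.setIntegral_nonneg measurableSet_Ioc
      (fun u hu => h_nonneg u (ha.trans hu.1.le))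
  linarith

/-- `s ↦ ∫_{(0, z s]} h` is integrable on `Icc 0 t` when `z` is continuous & nonneg. -/
lemma regAux_Fz_int (h : ℝ → ℝ)
    (h_loc : ∀ T : ℝ, MeasureTheory.IntegrableOn h (Set.Icc 0 T))
    {z : ℝ → ℝ} (hz : ContinuousOn z (Set.Ici 0))
    (hz0 : ∀ s, 0 ≤ s → 0 ≤ z s) {t : ℝ} (ht : 0 ≤ t) :
    IntegrableOn (fun s => ∫ u in Set.Ioc (0:ℝ) (z s), h u) (Set.Icc 0 t) := by
  have hzc : ContinuousOn z (Set.Icc 0 t) := hz.mono (fun x hx => hx.1)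
  obtain ⟨B, hB⟩ := (isCompact_Icc.bddAbove_image hzc)
  have hB' : ∀ s ∈ Set.Icc (0:ℝ) t, z s ∈ Set.Icc (0:ℝ) (max B 0) := by
    intro s hs
    exact ⟨hz0 s hs.1, le_trans (hB (Set.mem_image_of_mem z hs)) (le_max_left _ _)⟩
  have hG : ContinuousOn (fun x => ∫ u in Set.Ioc (0:ℝ) x, h u) (Set.Icc 0 (max B 0)) :=
    intervalIntegral.continuousOn_primitive (h_loc (max B 0))
  have hcomp : ContinuousOn (fun s => ∫ u in Set.Ioc (0:ℝ) (z s), h u) (Set.Icc 0 t) :=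
    hG.comp hzc hB'
  exact hcomp.integrableOn_Icc

/-- One-sided comparison: `z₁ t - z₂ t ≤ 2 * sup_{[0,T]} |y₁ - y₂|`. -/
lemma regAux_one_sided (h : ℝ → ℝ)
    (h_nonneg : ∀ u, 0 ≤ u → 0 ≤ h u)
    (h_loc : ∀ T : ℝ, MeasureTheory.IntegrableOn h (Set.Icc 0 T))
    (y₁ y₂ z₁ l₁ z₂ l₂ : ℝ → ℝ)
    (hy₁ : ContinuousOn y₁ (Set.Ici 0)) (hy₂ : ContinuousOn y₂ (Set.Ici 0))
    (sol₁ : IsRegulatorSolution h y₁ z₁ l₁) (sol₂ : IsRegulatorSolution h y₂ z₂ l₂)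
    (T : ℝ) (hT : 0 ≤ T) (t : ℝ) (ht : t ∈ Set.Icc (0:ℝ) T) :
    z₁ t - z₂ t ≤ 2 * sSup ((fun s => |y₁ s - y₂ s|) '' Set.Icc (0:ℝ) T) := by
  set M := sSup ((fun s => |y₁ s - y₂ s|) '' Set.Icc (0:ℝ) T) with hM
  -- the sup dominates every value
  have hbdd : BddAbove ((fun s => |y₁ s - y₂ s|) '' Set.Icc (0:ℝ) T) := by
    apply IsCompact.bddAbove_image isCompact_Icc
    exact ((hy₁.sub hy₂).abs).mono (fun x hx => hx.1)
  have hMle : ∀ s ∈ Set.Icc (0:ℝ) T, |y₁ s - y₂ s| ≤ M := fun s hs =>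
    le_csSup hbdd (Set.mem_image_of_mem _ hs)
  have hM0 : 0 ≤ M := le_trans (abs_nonneg _) (hMle 0 ⟨le_refl 0, hT⟩)
  have ht0 : 0 ≤ t := ht.1
  -- trivial case z₁ t ≤ z₂ t
  rcases le_or_gt (z₁ t) (z₂ t) with hle | hgt
  · linarith
  -- trivial case t = 0
  rcases eq_or_lt_of_le ht0 with ht0' | htpos
  · have e₁ := sol₁.eqn 0 le_rfl
    have e₂ := sol₂.eqn 0 le_rfl
    simp only [Set.Ioc_self, MeasureTheory.Measure.restrict_empty,
      MeasureTheory.integral_zero_measure, sol₁.l_zero, sol₂.l_zero] at e₁ e₂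
    rw [← ht0']
    have := hMle 0 ⟨le_refl 0, hT⟩
    have h0 : y₁ 0 - y₂ 0 ≤ |y₁ 0 - y₂ 0| := le_abs_self _
    rw [e₁, e₂]
    linarith
  -- main case: 0 < t, z₂ t < z₁ t
  set S : Set ℝ := {s ∈ Set.Icc 0 t | z₁ s ≤ z₂ s} ∪ {0} with hS
  have hS_closed : IsClosed S := by
    apply IsClosed.union _ isClosed_singleton
    have : {s ∈ Set.Icc 0 t | z₁ s ≤ z₂ s}
        = Set.Icc 0 t ∩ (fun s => z₂ s - z₁ s) ⁻¹' Set.Ici 0 := by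
      ext s; simp [Set.mem_setOf_eq, sub_nonneg]
    rw [this]
    exact ContinuousOn.preimage_isClosed_of_isClosed
      ((sol₂.z_cont.mono (fun x hx => hx.1)).sub (sol₁.z_cont.mono (fun x hx => hx.1)))
      isClosed_Icc isClosed_Ici
  have hS_ne : S.Nonempty := ⟨0, Or.inr rfl⟩
  have hS_bdd : BddAbove S := by
    refine ⟨t, fun s hs => ?_⟩
    rcases hs with hs | hs
    · exact hs.1.2
    · simp at hs; simp [hs]; exact ht0
  set σ := sSup S with hσdef
  have hσ_mem : σ ∈ S := hS_closed.csSup_mem hS_ne hS_bdd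
  have hσ0 : 0 ≤ σ := le_csSup hS_bdd (Or.inr rfl)
  have hσt : σ ≤ t := csSup_le hS_ne (by
    rintro s (hs | hs)
    · exact hs.1.2
    · simp at hs; simp [hs]; exact ht0)
  have hσ_lt : σ < t := by
    rcases eq_or_lt_of_le hσt with heq | hlt
    · exfalso
      rcases hσ_mem with hm | hm
      · rw [heq] at hm; exact absurd hm.2 (not_le.mpr hgt)
      · simp at hm; rw [hm] at heq; exact absurd heq.symm (ne_of_gt htpos)
    · exact hlt
  -- points in (σ, t] have z₂ < z₁, hence 0 < z₁
  have hnotS : ∀ s, σ < s → s ≤ t → z₂ s < z₁ s := by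
    intro s hσs hst
    by_contra hcon
    push_neg at hcon
    have : s ∈ S := Or.inl ⟨⟨hσ0.trans hσs.le, hst⟩, hcon⟩
    exact absurd (le_csSup hS_bdd this) (not_le.mpr hσs)
  have hz₁pos : ∀ s, σ < s → s ≤ t → 0 < z₁ s := fun s h1 h2 =>
    lt_of_le_of_lt (sol₂.z_nonneg s (hσ0.trans h1.le)) (hnotS s h1 h2)
  -- l₁ is flat on (σ, t], and by continuity l₁ σ = l₁ t
  have hl₁flat : l₁ σ = l₁ t := by
    have hconst : ∀ s ∈ Set.Ioc σ t, l₁ s = l₁ t := by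
      intro s hs
      exact sol₁.l_flat s t (hσ0.trans hs.1.le) hs.2
        (fun u hu => hz₁pos u (lt_of_lt_of_le hs.1 hu.1) hu.2)
    have hne : (𝓝[Set.Ioc σ t] σ).NeBot := by
      rw [← mem_closure_iff_nhdsWithin_neBot, closure_Ioc (ne_of_lt hσ_lt)]
      exact ⟨le_refl σ, hσ_lt.le⟩
    have h1 : Tendsto l₁ (𝓝[Set.Ioc σ t] σ) (𝓝 (l₁ σ)) :=
      (sol₁.l_cont σ hσ0).mono (fun x hx => hσ0.trans hx.1.le)
    have h2 : Tendsto l₁ (𝓝[Set.Ioc σ t] σ) (𝓝 (l₁ t)) := by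
      apply Tendsto.congr' _ tendsto_const_nhds
      exact eventually_mem_nhdsWithin.mono (fun s hs => (hconst s hs).symm)
    exact tendsto_nhds_unique h1 h2
  -- integrability
  have hint₁ : IntegrableOn (fun s => ∫ u in Set.Ioc (0:ℝ) (z₁ s), h u) (Set.Icc 0 t) :=
    regAux_Fz_int h h_loc sol₁.z_cont sol₁.z_nonneg ht0
  have hint₂ : IntegrableOn (fun s => ∫ u in Set.Ioc (0:ℝ) (z₂ s), h u) (Set.Icc 0 t) :=
    regAux_Fz_int h h_loc sol₂.z_cont sol₂.z_nonneg ht0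
  have hsub0σ : Set.Ioc (0:ℝ) σ ⊆ Set.Icc 0 t := fun x hx => ⟨hx.1.le, hx.2.trans hσt⟩
  have hsubσt : Set.Ioc σ t ⊆ Set.Icc 0 t := fun x hx => ⟨hσ0.trans hx.1.le, hx.2⟩
  -- integral splits
  have hsplit₁ : (∫ s in Set.Ioc (0:ℝ) t, ∫ u in Set.Ioc (0:ℝ) (z₁ s), h u)
      = (∫ s in Set.Ioc (0:ℝ) σ, ∫ u in Set.Ioc (0:ℝ) (z₁ s), h u)
        + ∫ s in Set.Ioc σ t, ∫ u in Set.Ioc (0:ℝ) (z₁ s), h u := by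
    rw [← MeasureTheory.setIntegral_union (Set.Ioc_disjoint_Ioc_of_le le_rfl) measurableSet_Ioc
      (hint₁.mono_set hsub0σ) (hint₁.mono_set hsubσt),
      Set.Ioc_union_Ioc_eq_Ioc hσ0 hσt]
  have hsplit₂ : (∫ s in Set.Ioc (0:ℝ) t, ∫ u in Set.Ioc (0:ℝ) (z₂ s), h u)
      = (∫ s in Set.Ioc (0:ℝ) σ, ∫ u in Set.Ioc (0:ℝ) (z₂ s), h u)
        + ∫ s in Set.Ioc σ t, ∫ u in Set.Ioc (0:ℝ) (z₂ s), h u := by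
    rw [← MeasureTheory.setIntegral_union (Set.Ioc_disjoint_Ioc_of_le le_rfl) measurableSet_Ioc
      (hint₂.mono_set hsub0σ) (hint₂.mono_set hsubσt),
      Set.Ioc_union_Ioc_eq_Ioc hσ0 hσt]
  -- comparison on (σ, t]
  have hcomp : (∫ s in Set.Ioc σ t, ∫ u in Set.Ioc (0:ℝ) (z₂ s), h u)
      ≤ ∫ s in Set.Ioc σ t, ∫ u in Set.Ioc (0:ℝ) (z₁ s), h u := by
    apply MeasureTheory.setIntegral_mono_on (hint₂.mono_set hsubσt)
      (hint₁.mono_set hsubσt) measurableSet_Ioc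
    intro s hs
    exact regAux_G_mono h h_nonneg h_loc (sol₂.z_nonneg s (hσ0.trans hs.1.le))
      (hnotS s hs.1 hs.2).le
  -- equations
  have e₁t := sol₁.eqn t ht0
  have e₂t := sol₂.eqn t ht0
  have e₁σ := sol₁.eqn σ hσ0
  have e₂σ := sol₂.eqn σ hσ0
  have hl₂mono : l₂ σ ≤ l₂ t := sol₂.l_mono hσ0 (hσ0.trans hσt) hσt
  -- bound at σ
  have hfσ : z₁ σ - z₂ σ ≤ (y₁ σ - y₂ σ) - min 0 (y₁ σ - y₂ σ) := by
    rcases hσ_mem with hm | hm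
    · have h1 : z₁ σ - z₂ σ ≤ 0 := by linarith [hm.2]
      have h2 : min 0 (y₁ σ - y₂ σ) ≤ y₁ σ - y₂ σ := min_le_right _ _
      linarith
    · simp only [Set.mem_singleton_iff] at hm
      have hσ0' : σ = 0 := hm
      rw [hσ0'] at e₁σ e₂σ ⊢
      simp only [Set.Ioc_self, MeasureTheory.Measure.restrict_empty,
        MeasureTheory.integral_zero_measure, sol₁.l_zero, sol₂.l_zero] at e₁σ e₂σ
      have : min 0 (y₁ 0 - y₂ 0) ≤ 0 := min_le_left _ _
      rw [e₁σ, e₂σ]; linarith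
  have hyσ : |y₁ σ - y₂ σ| ≤ M := hMle σ ⟨hσ0, hσt.trans ht.2⟩
  have hyt : |y₁ t - y₂ t| ≤ M := hMle t ht
  have habsσ : -(min 0 (y₁ σ - y₂ σ)) ≤ M := by
    rcases le_or_gt 0 (y₁ σ - y₂ σ) with hc | hc
    · simp [min_eq_left hc]; exact hM0
    · rw [min_eq_right hc.le]
      have := neg_abs_le (y₁ σ - y₂ σ)
      have := abs_le.mp hyσ
      linarith [this.1]
  have hytabs := abs_le.mp hyt
  linarith [hytabs.1, hytabs.2, hcomp]

/-- Lipschitz continuity (z-component) of the one-sided nonlinear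
generalized regulator map: `sup_{[0,T]} |z₁ - z₂| ≤ κ · sup_{[0,T]} |y₁ - y₂|`. -/
theorem regulator_lipschitz (h : ℝ → ℝ)
    (h_meas : Measurable h)
    (h_nonneg : ∀ u, 0 ≤ u → 0 ≤ h u)
    (h_loc : ∀ T : ℝ, MeasureTheory.IntegrableOn h (Set.Icc 0 T)) :
    ∃ κ > (0:ℝ), ∀ y₁ y₂ z₁ l₁ z₂ l₂ : ℝ → ℝ,
      ContinuousOn y₁ (Set.Ici 0) → ContinuousOn y₂ (Set.Ici 0) →
      0 ≤ y₁ 0 → 0 ≤ y₂ 0 →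
      IsRegulatorSolution h y₁ z₁ l₁ → IsRegulatorSolution h y₂ z₂ l₂ →
      ∀ T, 0 ≤ T → ∀ t ∈ Set.Icc (0:ℝ) T,
        |z₁ t - z₂ t| ≤ κ * sSup ((fun s => |y₁ s - y₂ s|) '' Set.Icc (0:ℝ) T) := by
  refine ⟨2, by norm_num, ?_⟩
  intro y₁ y₂ z₁ l₁ z₂ l₂ hy₁ hy₂ hy₁0 hy₂0 sol₁ sol₂ T hT t ht
  have himg : ((fun s => |y₂ s - y₁ s|) '' Set.Icc (0:ℝ) T)
      = ((fun s => |y₁ s - y₂ s|) '' Set.Icc (0:ℝ) T) := by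
    simp only [abs_sub_comm]
  rw [abs_sub_le_iff]
  constructor
  · exact regAux_one_sided h h_nonneg h_loc y₁ y₂ z₁ l₁ z₂ l₂ hy₁ hy₂ sol₁ sol₂ T hT t ht
  · have := regAux_one_sided h h_nonneg h_loc y₂ y₁ z₂ l₂ z₁ l₁ hy₂ hy₁ sol₂ sol₁ T hT t ht
    rwa [himg] at this
end

section
/- Let h : [0,∞) → [0,∞) be continuous and let y : [0,∞) → ℝ be continuous with y(0) ≥ 0. Then there exists exactly one pair (z, l) of continuous functions on [0,∞) solving the one-sided nonlinear generalized regulator problem with hazard function h and input y. -/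
open Set MeasureTheory Filter intervalIntegral Topology BoundedContinuousFunction

noncomputable section RegAux

/-- running maximum of `f` over `[0, t]`. -/
def runMax (f : ℝ → ℝ) (t : ℝ) : ℝ := sSup (f '' Set.Icc 0 t)

variable {f g : ℝ → ℝ} {t s c : ℝ}

theorem runMax_bddAbove (hf : ContinuousOn f (Set.Icc 0 t)) :
    BddAbove (f '' Set.Icc 0 t) :=
  (isCompact_Icc.image_of_continuousOn hf).bddAbove

theorem le_runMax (hf : ContinuousOn f (Set.Icc 0 t)) (hs : s ∈ Set.Icc 0 t) :
    f s ≤ runMax f t :=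
  le_csSup (runMax_bddAbove hf) (Set.mem_image_of_mem f hs)

theorem runMax_le (ht : 0 ≤ t) (hc : ∀ s ∈ Set.Icc 0 t, f s ≤ c) :
    runMax f t ≤ c :=
  csSup_le ((Set.nonempty_Icc.2 ht).image f) (by rintro _ ⟨s, hs, rfl⟩; exact hc s hs)

theorem runMax_mono (hf : ContinuousOn f (Set.Icc 0 t)) (hs : 0 ≤ s) (hst : s ≤ t) :
    runMax f s ≤ runMax f t :=
  runMax_le hs fun u hu => le_runMax hf ⟨hu.1, hu.2.trans hst⟩

theorem runMax_exists (hf : ContinuousOn f (Set.Icc 0 t)) (ht : 0 ≤ t) :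
    ∃ s ∈ Set.Icc 0 t, runMax f t = f s := by
  obtain ⟨s, hs, hmax⟩ := isCompact_Icc.exists_isMaxOn (Set.nonempty_Icc.2 ht) hf
  exact ⟨s, hs, le_antisymm (runMax_le ht fun u hu => hmax hu) (le_runMax hf hs)⟩

theorem runMax_zero (hf0 : True) : runMax f 0 = f 0 := by
  simp [runMax, Set.Icc_self]

theorem runMax_nonneg (hf : ContinuousOn f (Set.Icc 0 t)) (ht : 0 ≤ t)
    (h0 : 0 ≤ f 0) : 0 ≤ runMax f t :=
  h0.trans (le_runMax hf ⟨le_refl 0, ht⟩)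

/-- `runMax` is Lipschitz-close under sup-perturbations. -/
theorem runMax_sub_le (hf : ContinuousOn f (Set.Icc 0 t)) (hg : ContinuousOn g (Set.Icc 0 t))
    (ht : 0 ≤ t) (hc : ∀ s ∈ Set.Icc 0 t, |f s - g s| ≤ c) :
    |runMax f t - runMax g t| ≤ c := by
  rw [abs_sub_le_iff]
  constructor
  · rw [sub_le_iff_le_add]
    refine runMax_le ht fun s hs => ?_
    have := hc s hs
    have h1 : f s ≤ g s + c := by cases abs_sub_le_iff.1 this; linarith
    exact h1.trans (by have := le_runMax hg hs; linarith)
  · rw [sub_le_iff_le_add]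
    refine runMax_le ht fun s hs => ?_
    have := hc s hs
    have h1 : g s ≤ f s + c := by cases abs_sub_le_iff.1 this; linarith
    exact h1.trans (by have := le_runMax hf hs; linarith)

/-- continuity of the running maximum of a (globally) continuous function, on `[0,∞)`. -/
theorem runMax_continuousOn (hf : Continuous f) : ContinuousOn (runMax f) (Set.Ici 0) := by
  intro t₀ ht₀
  rw [Metric.continuousWithinAt_iff]
  intro ε hε
  obtain ⟨δ, hδ, hδε⟩ := Metric.continuousAt_iff.1 hf.continuousAt (ε / 4) (by linarith)
  have hδε' : ∀ x : ℝ, |x - t₀| < δ → |f x - f t₀| < ε / 4 := by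
    intro x hx
    have := hδε (show dist x t₀ < δ by rwa [Real.dist_eq])
    rwa [Real.dist_eq] at this
  refine ⟨δ / 2, by linarith, fun t ht hdist => ?_⟩
  have ht' : (0:ℝ) ≤ t := ht
  have key : ∀ a b : ℝ, 0 ≤ a → a ≤ b → b - a < δ / 2 → |b - t₀| < δ / 2 →
      runMax f b ≤ runMax f a + ε / 2 := by
    intro a b ha hab hba hbt
    refine runMax_le (ha.trans hab) fun s hs => ?_
    rcases le_or_gt s a with hsa | hsa
    · exact (le_runMax (hf.continuousOn) ⟨hs.1, hsa⟩).trans (by linarith)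
    · have hs1 : |s - t₀| < δ := by
        rw [abs_lt] at hbt ⊢
        constructor <;> nlinarith [hs.2]
      have ha1 : |a - t₀| < δ := by
        rw [abs_lt] at hbt ⊢
        constructor <;> nlinarith
      have h2 := hδε' s hs1
      have h4 := hδε' a ha1
      have ha' : f a ≤ runMax f a := le_runMax hf.continuousOn ⟨ha, le_refl a⟩
      rw [abs_lt] at h2 h4
      linarith
  rw [Real.dist_eq]
  rw [Real.dist_eq] at hdist
  rcases le_total t t₀ with htt | htt
  · have h1 : runMax f t ≤ runMax f t₀ := runMax_mono hf.continuousOn ht' htt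
    have h2 : runMax f t₀ ≤ runMax f t + ε / 2 := by
      refine key t t₀ ht' htt ?_ (by simpa using by linarith)
      rw [abs_lt] at hdist; linarith
    rw [abs_lt]; constructor <;> linarith
  · have h1 : runMax f t₀ ≤ runMax f t := runMax_mono hf.continuousOn ht₀ htt
    have h2 : runMax f t ≤ runMax f t₀ + ε / 2 := by
      refine key t₀ t ht₀ htt ?_ hdist
      rw [abs_lt] at hdist; linarith
    rw [abs_lt]; constructor <;> linarith

end RegAux

noncomputable section RegAux2


variable (h : ℝ → ℝ)

/-- continuous extension of the hazard to all of `ℝ`. -/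
def hpos : ℝ → ℝ := fun u => h (max 0 u)

/-- the primitive `H(x) = ∫₀^x h`. -/
def Hfun : ℝ → ℝ := fun x => ∫ u in (0:ℝ)..(max 0 x), hpos h u

variable {h}

theorem hpos_cont (hc : ContinuousOn h (Set.Ici 0)) : Continuous (hpos h) :=
  hc.comp_continuous (continuous_const.max continuous_id) fun x => le_max_left 0 x

theorem hpos_nonneg (hn : ∀ u, 0 ≤ u → 0 ≤ h u) : ∀ u, 0 ≤ hpos h u :=
  fun u => hn _ (le_max_left 0 u)

theorem Hfun_cont (hc : ContinuousOn h (Set.Ici 0)) : Continuous (Hfun h) :=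
  (intervalIntegral.continuous_primitive
      (fun _ _ => (hpos_cont hc).intervalIntegrable _ _) 0).comp
    (continuous_const.max continuous_id)

theorem Hfun_eq_setIntegral (x : ℝ) : Hfun h x = ∫ u in Set.Ioc (0:ℝ) x, hpos h u := by
  rcases le_total 0 x with hx | hx
  · rw [Hfun, max_eq_right hx, intervalIntegral.integral_of_le hx]
  · rw [Hfun, max_eq_left hx, Set.Ioc_eq_empty (by simpa using hx)]
    simp

theorem inner_integral_eq {v : ℝ} (hv : 0 ≤ v) :
    ∫ u in Set.Ioc (0:ℝ) v, h u = Hfun h v := by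
  rw [Hfun_eq_setIntegral]
  refine setIntegral_congr_fun measurableSet_Ioc fun u hu => ?_
  simp [hpos, max_eq_right hu.1.le]

theorem Hfun_nonneg (hn : ∀ u, 0 ≤ u → 0 ≤ h u) (x : ℝ) : 0 ≤ Hfun h x := by
  rw [Hfun_eq_setIntegral]
  exact setIntegral_nonneg measurableSet_Ioc fun u _ => hpos_nonneg hn u

theorem Hfun_lip (hc : ContinuousOn h (Set.Ici 0)) (hn : ∀ u, 0 ≤ u → 0 ≤ h u)
    {M v w : ℝ} (hM : 0 ≤ M) (hv : v ≤ M) (hw : w ≤ M) :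
    |Hfun h v - Hfun h w| ≤ runMax (hpos h) M * |v - w| := by
  have hC0 : 0 ≤ runMax (hpos h) M :=
    (hpos_nonneg hn 0).trans (le_csSup ((isCompact_Icc.image_of_continuousOn
      (hpos_cont hc).continuousOn).bddAbove) (Set.mem_image_of_mem _ ⟨le_refl 0, hM⟩))
  have key : ∀ v w : ℝ, w ≤ v → v ≤ M →
      Hfun h v - Hfun h w ≤ runMax (hpos h) M * (v - w) ∧ 0 ≤ Hfun h v - Hfun h w := by
    intro v w hwv hvM
    set C := runMax (hpos h) M with hC
    have h1 : max 0 w ≤ max 0 v := max_le_max (le_refl 0) hwv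
    have h2 : max 0 v ≤ M := max_le hM hvM
    have hsplit : Hfun h v - Hfun h w = ∫ u in (max 0 w)..(max 0 v), hpos h u := by
      rw [Hfun, Hfun]
      exact intervalIntegral.integral_interval_sub_left
        ((hpos_cont hc).intervalIntegrable _ _) ((hpos_cont hc).intervalIntegrable _ _)
    constructor
    · rw [hsplit]
      calc ∫ u in (max 0 w)..(max 0 v), hpos h u ≤ ∫ _ in (max 0 w)..(max 0 v), C := by
            refine intervalIntegral.integral_mono_on h1 ((hpos_cont hc).intervalIntegrable _ _)
              (intervalIntegrable_const) fun u hu => ?_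
            exact le_csSup ((isCompact_Icc.image_of_continuousOn
              (hpos_cont hc).continuousOn).bddAbove)
              (Set.mem_image_of_mem _ ⟨(le_max_left 0 w).trans hu.1, hu.2.trans h2⟩)
        _ = C * (max 0 v - max 0 w) := by simp [intervalIntegral.integral_const, mul_comm]
        _ ≤ C * (v - w) := by
            refine mul_le_mul_of_nonneg_left ?_ hC0
            rcases le_total v 0 with hv0 | hv0
            · have : max 0 v = 0 := max_eq_left hv0
              have h3 : max 0 w = 0 := max_eq_left (hwv.trans hv0)
              simp [this, h3]; linarith
            · rw [max_eq_right hv0]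
              rcases le_total w 0 with hw0 | hw0
              · rw [max_eq_left hw0]; linarith
              · rw [max_eq_right hw0]
    · rw [hsplit]
      exact intervalIntegral.integral_nonneg h1 fun u _ => hpos_nonneg hn u
  rcases le_total w v with hwv | hwv
  · obtain ⟨hle, hge⟩ := key v w hwv hv
    rw [abs_of_nonneg hge, abs_of_nonneg (by linarith : (0:ℝ) ≤ v - w)]
    exact hle
  · obtain ⟨hle, hge⟩ := key w v hwv hw
    rw [abs_sub_comm, abs_sub_comm v w, abs_of_nonneg hge,
      abs_of_nonneg (by linarith : (0:ℝ) ≤ w - v)]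
    exact hle

end RegAux2

noncomputable section RegAux3

theorem right_seq_tendsto {T τ t : ℝ} (hτ : τ ∈ Set.Icc 0 T) (hτt : τ < t) (htT : t ≤ T) :
    (∀ n : ℕ, (τ + (t - τ) / (n + 1)) ∈ Set.Icc 0 T ∧ τ < τ + (t - τ) / (n + 1) ∧
      τ + (t - τ) / (n + 1) ≤ t) ∧
    Tendsto (fun n : ℕ => τ + (t - τ) / (n + 1)) atTop (nhdsWithin τ (Set.Icc 0 T)) := by
  have hmem : ∀ n : ℕ, (τ + (t - τ) / (n + 1)) ∈ Set.Icc 0 T ∧ τ < τ + (t - τ) / (n + 1) ∧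
      τ + (t - τ) / (n + 1) ≤ t := by
    intro n
    have h1 : (0:ℝ) < (n:ℝ) + 1 := by positivity
    have h2 : (0:ℝ) < (t - τ) / (n + 1) := div_pos (by linarith) h1
    have h3 : (t - τ) / (n + 1) ≤ t - τ := by
      rw [div_le_iff₀ h1]; nlinarith
    refine ⟨⟨by linarith [hτ.1], by linarith⟩, by linarith, by linarith⟩
  refine ⟨hmem, ?_⟩
  apply tendsto_nhdsWithin_of_tendsto_nhds_of_eventually_within
  · have h0 : Tendsto (fun n : ℕ => (t - τ) * (1 / ((n:ℝ) + 1))) atTop (𝓝 ((t - τ) * 0)) :=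
      tendsto_const_nhds.mul tendsto_one_div_add_atTop_nhds_zero_nat
    have := tendsto_const_nhds.add (f := fun _ : ℕ => τ) h0
    simpa [mul_one_div, div_eq_mul_inv] using this
  · exact Eventually.of_forall fun n => (hmem n).1

theorem right_limit_eq {f : ℝ → ℝ} {T τ t c : ℝ}
    (hf : ContinuousWithinAt f (Set.Icc 0 T) τ) (hτ : τ ∈ Set.Icc 0 T) (hτt : τ < t)
    (htT : t ≤ T) (hval : ∀ s, τ < s → s ≤ t → f s = c) : f τ = c := by
  obtain ⟨hmem, htend⟩ := right_seq_tendsto hτ hτt htT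
  have h1 : Tendsto (fun n : ℕ => f (τ + (t - τ) / (n + 1))) atTop (𝓝 (f τ)) :=
    hf.tendsto.comp htend
  have h2 : (fun n : ℕ => f (τ + (t - τ) / (n + 1))) = fun _ => c := by
    funext n; exact hval _ (hmem n).2.1 (hmem n).2.2
  rw [h2] at h1
  exact (tendsto_nhds_unique tendsto_const_nhds h1).symm

theorem right_limit_nonneg {f : ℝ → ℝ} {T τ t : ℝ}
    (hf : ContinuousWithinAt f (Set.Icc 0 T) τ) (hτ : τ ∈ Set.Icc 0 T) (hτt : τ < t)
    (htT : t ≤ T) (hval : ∀ s, τ < s → s ≤ t → 0 ≤ f s) : 0 ≤ f τ := by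
  obtain ⟨hmem, htend⟩ := right_seq_tendsto hτ hτt htT
  have h1 : Tendsto (fun n : ℕ => f (τ + (t - τ) / (n + 1))) atTop (𝓝 (f τ)) :=
    hf.tendsto.comp htend
  exact ge_of_tendsto h1 (Eventually.of_forall fun n => hval _ (hmem n).2.1 (hmem n).2.2)

end RegAux3
noncomputable section RegCore

/-- the "free" input process associated with drift `G`, input `y`, and state `z`. -/
def xinput (G y z : ℝ → ℝ) (t : ℝ) : ℝ := y t - ∫ s in Set.Ioc (0:ℝ) t, G (z s)

/-- the reflected input `y(t) + sup_{s ≤ t} (y(s))⁻`, an a priori upper bound for solutions. -/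
def zup (y : ℝ → ℝ) : ℝ → ℝ := fun t => y t + runMax (fun s => max 0 (-(y s))) t

/-- solution of the generalized regulator problem with drift `G` on `[0, T]`. -/
structure PreSol (G y : ℝ → ℝ) (T : ℝ) (z l : ℝ → ℝ) : Prop where
  z_cont : ContinuousOn z (Set.Icc 0 T)
  l_cont : ContinuousOn l (Set.Icc 0 T)
  z_nonneg : ∀ t ∈ Set.Icc 0 T, 0 ≤ z t
  eqn : ∀ t ∈ Set.Icc 0 T, z t = xinput G y z t + l t
  l_mono : MonotoneOn l (Set.Icc 0 T)
  l_zero : l 0 = 0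
  l_flat : ∀ a b, 0 ≤ a → a ≤ b → b ≤ T → (∀ t ∈ Set.Icc a b, 0 < z t) → l a = l b

variable {G y z l z' l' : ℝ → ℝ} {T : ℝ}

theorem integrableOn_comp (hG : Continuous G) (hz : ContinuousOn z (Set.Icc 0 T)) :
    IntegrableOn (fun s => G (z s)) (Set.Icc 0 T) :=
  (hG.comp_continuousOn hz).integrableOn_Icc

theorem xinput_contOn (hy : Continuous y) (hG : Continuous G)
    (hz : ContinuousOn z (Set.Icc 0 T)) : ContinuousOn (xinput G y z) (Set.Icc 0 T) :=
  hy.continuousOn.sub (_root_.intervalIntegral.continuousOn_primitive (integrableOn_comp hG hz))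

theorem PreSol.z_zero (hP : PreSol G y T z l) (hT : 0 ≤ T) : z 0 = y 0 := by
  have := hP.eqn 0 ⟨le_refl 0, hT⟩
  simpa [xinput, Set.Ioc_self, hP.l_zero] using this

/-- splitting of the drift integral. -/
theorem integral_Ioc_split (hG : Continuous G) (hz : ContinuousOn z (Set.Icc 0 T))
    {τ t : ℝ} (hτ : 0 ≤ τ) (hτt : τ ≤ t) (ht : t ≤ T) :
    ∫ s in Set.Ioc (0:ℝ) t, G (z s) =
      (∫ s in Set.Ioc (0:ℝ) τ, G (z s)) + ∫ s in Set.Ioc τ t, G (z s) := by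
  rw [← Set.Ioc_union_Ioc_eq_Ioc hτ hτt]
  refine MeasureTheory.setIntegral_union (Set.Ioc_disjoint_Ioc_of_le le_rfl) measurableSet_Ioc ?_ ?_
  · exact (integrableOn_comp hG hz).mono_set
      ((Set.Ioc_subset_Icc_self).trans (Set.Icc_subset_Icc le_rfl (hτt.trans ht)))
  · exact (integrableOn_comp hG hz).mono_set
      ((Set.Ioc_subset_Icc_self).trans (Set.Icc_subset_Icc hτ ht))

/-- Skorokhod uniqueness: the local time of any solution is the running maximum
of the negative part of the free input. -/
theorem PreSol.l_eq_runMax (hy : Continuous y) (hG : Continuous G)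
    (hP : PreSol G y T z l) {t : ℝ} (ht : t ∈ Set.Icc 0 T) :
    l t = runMax (fun s => max 0 (-(xinput G y z s))) t := by
  set x := xinput G y z with hxdef
  have hsub : Set.Icc 0 t ⊆ Set.Icc 0 T := Set.Icc_subset_Icc le_rfl ht.2
  have h0T : (0:ℝ) ∈ Set.Icc 0 T := ⟨le_refl 0, ht.1.trans ht.2⟩
  have hx : ContinuousOn x (Set.Icc 0 T) := xinput_contOn hy hG hP.z_cont
  have hfx : ContinuousOn (fun s => max 0 (-(x s))) (Set.Icc 0 t) :=
    continuousOn_const.sup (hx.mono hsub).neg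
  have hge : runMax (fun s => max 0 (-(x s))) t ≤ l t := by
    refine runMax_le ht.1 fun s hs => ?_
    have hzs := hP.z_nonneg s (hsub hs)
    have heq := hP.eqn s (hsub hs)
    have hls : 0 ≤ l s := by
      have := hP.l_mono h0T (hsub hs) hs.1
      rwa [hP.l_zero] at this
    have hlt : l s ≤ l t := hP.l_mono (hsub hs) ht hs.2
    exact max_le (hls.trans hlt) (by linarith)
  refine le_antisymm ?_ hge
  by_cases hex : ∃ s ∈ Set.Icc 0 t, z s = 0
  · classical
    set S := Set.Icc 0 t ∩ z ⁻¹' {0} with hS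
    have hSne : S.Nonempty := by
      obtain ⟨s, hs, hzs⟩ := hex; exact ⟨s, hs, by simp [hzs]⟩
    have hSbdd : BddAbove S := (bddAbove_Icc).mono Set.inter_subset_left
    have hclosed : IsClosed S :=
      (hP.z_cont.mono hsub).preimage_isClosed_of_isClosed isClosed_Icc isClosed_singleton
    have hτS : sSup S ∈ S := hclosed.csSup_mem hSne hSbdd
    set τ := sSup S with hτdef
    obtain ⟨hτmem, hzτ0⟩ := hτS
    have hzτ : z τ = 0 := hzτ0
    have hτT : τ ∈ Set.Icc 0 T := hsub hτmem
    have hlτ : l τ = -(x τ) := by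
      have := hP.eqn τ hτT; rw [hzτ] at this; linarith
    have hlt_eq : l t = l τ := by
      rcases eq_or_lt_of_le hτmem.2 with heq | hτt
      · rw [heq]
      · refine (right_limit_eq (hP.l_cont τ hτT) hτT hτt ht.2 ?_).symm
        intro s hs1 hs2
        refine hP.l_flat s t (hτmem.1.trans hs1.le) hs2 ht.2 fun u hu => ?_
        have hzu := hP.z_nonneg u (hsub ⟨(hτmem.1.trans hs1.le).trans hu.1, hu.2⟩)
        rcases hzu.lt_or_eq with h | h
        · exact h
        · exfalso
          have huS : u ∈ S := ⟨⟨hτmem.1.trans (hs1.le.trans hu.1), hu.2⟩, by simp [← h]⟩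
          have := le_csSup hSbdd huS
          have : τ < u := hs1.trans_le hu.1
          linarith [le_csSup hSbdd huS]
    calc l t = l τ := hlt_eq
      _ = -(x τ) := hlτ
      _ ≤ max 0 (-(x τ)) := le_max_right _ _
      _ ≤ runMax (fun s => max 0 (-(x s))) t := le_runMax hfx hτmem
  · push_neg at hex
    have hpos : ∀ s ∈ Set.Icc 0 t, 0 < z s := fun s hs =>
      (hP.z_nonneg s (hsub hs)).lt_of_ne' (hex s hs)
    have hl0 : l t = 0 := by
      have := hP.l_flat 0 t (le_refl 0) ht.1 ht.2 hpos
      rw [← this, hP.l_zero]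
    rw [hl0]
    have h1 : max 0 (-(x t)) ≤ runMax (fun s => max 0 (-(x s))) t :=
      le_runMax hfx ⟨ht.1, le_refl t⟩
    linarith [le_max_left 0 (-(x t))]

theorem zup_contOn (hy : Continuous y) : ContinuousOn (zup y) (Set.Ici 0) :=
  hy.continuousOn.add (runMax_continuousOn (continuous_const.max hy.neg))

theorem zup_nonneg (hy : Continuous y) {t : ℝ} (ht : 0 ≤ t) : 0 ≤ zup y t := by
  have h1 : max 0 (-(y t)) ≤ runMax (fun s => max 0 (-(y s))) t :=
    le_runMax (continuous_const.max hy.neg).continuousOn ⟨ht, le_refl t⟩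
  have h2 : -(y t) ≤ max 0 (-(y t)) := le_max_right _ _
  simp only [zup]; linarith

theorem zup_mono (hy : Continuous y) {s t : ℝ} (hs : 0 ≤ s) (hst : s ≤ t) :
    zup y s - y s ≤ zup y t - y t := by
  simp only [zup, add_sub_cancel_left]
  exact runMax_mono (continuous_const.max hy.neg).continuousOn hs hst

/-- comparison: any solution is dominated by the solution of the driftless problem. -/
theorem PreSol.le_zup (hy : Continuous y) (hG : Continuous G) (hGn : ∀ v, 0 ≤ G v)
    (hP : PreSol G y T z l) : ∀ t ∈ Set.Icc 0 T, z t ≤ zup y t := by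
  intro t ht
  by_contra hgt
  push_neg at hgt
  have hsub : Set.Icc 0 t ⊆ Set.Icc 0 T := Set.Icc_subset_Icc le_rfl ht.2
  have hzupc : ContinuousOn (zup y) (Set.Icc 0 T) :=
    (zup_contOn hy).mono fun u hu => hu.1
  have hdiffc : ContinuousOn (fun s => z s - zup y s) (Set.Icc 0 T) :=
    hP.z_cont.sub hzupc
  classical
  set S := Set.Icc 0 t ∩ (fun s => z s - zup y s) ⁻¹' Set.Iic 0 with hS
  have h0S : (0:ℝ) ∈ S := by
    constructor
    · exact ⟨le_refl 0, ht.1⟩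
    · have hz0 : z 0 = y 0 := hP.z_zero (ht.1.trans ht.2)
      have : y 0 ≤ zup y 0 := by
        have : runMax (fun s => max 0 (-(y s))) 0 = max 0 (-(y 0)) := by
          simp [runMax, Set.Icc_self]
        simp only [zup, this]
        have := le_max_left 0 (-(y 0)); linarith
      simp only [Set.mem_preimage, Set.mem_Iic, hz0]; linarith
  have hSne : S.Nonempty := ⟨0, h0S⟩
  have hSbdd : BddAbove S := (bddAbove_Icc).mono Set.inter_subset_left
  have hclosed : IsClosed S :=
    (hdiffc.mono hsub).preimage_isClosed_of_isClosed isClosed_Icc isClosed_Iic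
  have hτS : sSup S ∈ S := hclosed.csSup_mem hSne hSbdd
  set τ := sSup S with hτdef
  obtain ⟨hτmem, hτle'⟩ := hτS
  have hτle : z τ ≤ zup y τ := by simpa using hτle'
  have hτT : τ ∈ Set.Icc 0 T := hsub hτmem
  have hτt : τ < t := by
    rcases eq_or_lt_of_le hτmem.2 with heq | h
    · exfalso; rw [heq] at hτle; linarith
    · exact h
  have hgt' : ∀ s, τ < s → s ≤ t → zup y s < z s := by
    intro s hs1 hs2
    by_contra hc
    push_neg at hc
    have hsS : s ∈ S := ⟨⟨hτmem.1.trans hs1.le, hs2⟩, by simp; linarith⟩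
    linarith [le_csSup hSbdd hsS]
  have hzτeq : z τ = zup y τ := by
    have h2 : 0 ≤ z τ - zup y τ := by
      refine right_limit_nonneg (f := fun s => z s - zup y s) (hdiffc τ hτT) hτT hτt ht.2 fun s hs1 hs2 => by
        show 0 ≤ z s - zup y s
        linarith [hgt' s hs1 hs2]
    linarith
  have hlflat : l τ = l t := by
    refine right_limit_eq (hP.l_cont τ hτT) hτT hτt ht.2 fun s hs1 hs2 => ?_
    refine hP.l_flat s t (hτmem.1.trans hs1.le) hs2 ht.2 fun u hu => ?_
    have h1 : zup y u < z u := hgt' u (hs1.trans_le hu.1) hu.2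
    have h2 : 0 ≤ zup y u := zup_nonneg hy ((hτmem.1.trans hs1.le).trans hu.1)
    linarith
  have heqt := hP.eqn t ht
  have heqτ := hP.eqn τ hτT
  have hsplit := integral_Ioc_split hG hP.z_cont hτmem.1 hτt.le ht.2
  have hpos : 0 ≤ ∫ s in Set.Ioc τ t, G (z s) :=
    MeasureTheory.setIntegral_nonneg measurableSet_Ioc fun u _ => hGn (z u)
  have hmono := zup_mono hy hτmem.1 hτt.le
  simp only [xinput] at heqt heqτ
  -- z t = y t - (∫_{0,τ} + ∫_{τ,t}) + l t, l t = l τ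
  have : z t ≤ zup y t := by
    have hzt : z t = y t - ((∫ s in Set.Ioc (0:ℝ) τ, G (z s)) + ∫ s in Set.Ioc τ t, G (z s))
        + l τ := by rw [heqt, hsplit, hlflat]
    have hzτ' : z τ = y τ - (∫ s in Set.Ioc (0:ℝ) τ, G (z s)) + l τ := heqτ
    nlinarith [hzτeq]
  linarith

/-- Gronwall-type lemma: a nonnegative continuous function dominated by `K` times its
own integral vanishes. -/
theorem gronwall_zero {g : ℝ → ℝ} {T K : ℝ} (hK : 0 ≤ K)
    (hg : ContinuousOn g (Set.Icc 0 T)) (hg0 : ∀ t ∈ Set.Icc 0 T, 0 ≤ g t)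
    (hineq : ∀ t ∈ Set.Icc 0 T, g t ≤ K * ∫ s in Set.Ioc (0:ℝ) t, g s) :
    ∀ t ∈ Set.Icc 0 T, g t = 0 := by
  have hT : (0:ℝ) ≤ T ∨ Set.Icc (0:ℝ) T = ∅ := by
    rcases le_total 0 T with h | h
    · exact Or.inl h
    · rcases eq_or_lt_of_le h with h' | h'
      · exact Or.inl h'.ge
      · exact Or.inr (Set.Icc_eq_empty (by linarith))
  rcases hT with hT | hT
  swap
  · intro t ht; rw [hT] at ht; exact absurd ht (Set.notMem_empty t)
  set B := runMax g T with hB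
  have hint : IntegrableOn g (Set.Icc 0 T) := hg.integrableOn_Icc
  have key : ∀ n : ℕ, ∀ t ∈ Set.Icc 0 T, g t ≤ B * (K ^ n * t ^ n / (n.factorial : ℝ)) := by
    intro n
    induction n with
    | zero => intro t ht; simpa using le_runMax hg ht
    | succ n ih =>
      intro t ht
      have hsub : Set.Ioc (0:ℝ) t ⊆ Set.Icc 0 T :=
        Set.Ioc_subset_Icc_self.trans (Set.Icc_subset_Icc le_rfl ht.2)
      have hfact : (0:ℝ) < (n.factorial : ℝ) := by positivity
      have hmono : ∫ s in Set.Ioc (0:ℝ) t, g s ≤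
          ∫ s in Set.Ioc (0:ℝ) t, (B * K ^ n / (n.factorial : ℝ)) * s ^ n := by
        refine MeasureTheory.setIntegral_mono_on (hint.mono_set hsub)
          ((Continuous.integrableOn_Icc (by continuity)).mono_set Set.Ioc_subset_Icc_self)
          measurableSet_Ioc fun s hs => ?_
        have := ih s (hsub hs)
        calc g s ≤ B * (K ^ n * s ^ n / (n.factorial : ℝ)) := this
          _ = (B * K ^ n / (n.factorial : ℝ)) * s ^ n := by ring
      have hcomp : ∫ s in Set.Ioc (0:ℝ) t, (B * K ^ n / (n.factorial : ℝ)) * s ^ n =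
          (B * K ^ n / (n.factorial : ℝ)) * (t ^ (n + 1) / (n + 1)) := by
        rw [MeasureTheory.integral_const_mul, ← intervalIntegral.integral_of_le ht.1,
          integral_pow]
        norm_num
      have h1 := hineq t ht
      have h2 : K * ∫ s in Set.Ioc (0:ℝ) t, g s ≤
          K * ((B * K ^ n / (n.factorial : ℝ)) * (t ^ (n + 1) / (n + 1))) := by
        rw [← hcomp]; exact mul_le_mul_of_nonneg_left hmono hK
      refine h1.trans (h2.trans (le_of_eq ?_))
      rw [Nat.factorial_succ]
      have hn1 : ((n:ℝ) + 1) ≠ 0 := by positivity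
      push_cast
      field_simp
      ring
  intro t ht
  have hlim : Tendsto (fun n : ℕ => B * (K ^ n * t ^ n / (n.factorial : ℝ))) atTop (𝓝 0) := by
    have h0 : Tendsto (fun n : ℕ => (K * t) ^ n / (n.factorial : ℝ)) atTop (𝓝 0) :=
      FloorSemiring.tendsto_pow_div_factorial_atTop (K * t)
    have := tendsto_const_nhds.mul h0 (f := fun _ : ℕ => B)
    simpa [mul_pow, mul_div_assoc] using this
  have hle : g t ≤ 0 := ge_of_tendsto hlim (Eventually.of_forall fun n => key n t ht)
  exact le_antisymm hle (hg0 t ht)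

/-- uniqueness of solutions on `[0, T]`, given a Lipschitz bound for the drift below
a common upper bound `M` of the two solutions. -/
theorem preSol_unique (hy : Continuous y) (hG : Continuous G) {C M : ℝ} (hC : 0 ≤ C)
    (hlip : ∀ v w : ℝ, v ≤ M → w ≤ M → |G v - G w| ≤ C * |v - w|)
    (hP : PreSol G y T z l) (hP' : PreSol G y T z' l')
    (hMz : ∀ t ∈ Set.Icc 0 T, z t ≤ M) (hMz' : ∀ t ∈ Set.Icc 0 T, z' t ≤ M) :
    ∀ t ∈ Set.Icc 0 T, z t = z' t ∧ l t = l' t := by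
  set g : ℝ → ℝ := fun s => |z s - z' s| with hgdef
  have hgc : ContinuousOn g (Set.Icc 0 T) := (hP.z_cont.sub hP'.z_cont).abs
  have hgint : IntegrableOn g (Set.Icc 0 T) := hgc.integrableOn_Icc
  have hGzint : IntegrableOn (fun s => G (z s)) (Set.Icc 0 T) := integrableOn_comp hG hP.z_cont
  have hGz'int : IntegrableOn (fun s => G (z' s)) (Set.Icc 0 T) := integrableOn_comp hG hP'.z_cont
  -- difference of the free inputs
  have hxd : ∀ t ∈ Set.Icc 0 T,
      |xinput G y z t - xinput G y z' t| ≤ C * ∫ s in Set.Ioc (0:ℝ) t, g s := by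
    intro t ht
    have hsub : Set.Ioc (0:ℝ) t ⊆ Set.Icc 0 T :=
      Set.Ioc_subset_Icc_self.trans (Set.Icc_subset_Icc le_rfl ht.2)
    have h1 : xinput G y z t - xinput G y z' t
        = ∫ s in Set.Ioc (0:ℝ) t, (G (z' s) - G (z s)) := by
      rw [MeasureTheory.integral_sub (hGz'int.mono_set hsub) (hGzint.mono_set hsub)]
      simp [xinput]
    rw [h1]
    calc |∫ s in Set.Ioc (0:ℝ) t, (G (z' s) - G (z s))|
        ≤ ∫ s in Set.Ioc (0:ℝ) t, |G (z' s) - G (z s)| :=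
          le_trans (le_of_eq (Real.norm_eq_abs _).symm)
            ((MeasureTheory.norm_integral_le_integral_norm _).trans
              (le_of_eq (by simp [Real.norm_eq_abs])))
      _ ≤ ∫ s in Set.Ioc (0:ℝ) t, C * g s := by
          refine MeasureTheory.setIntegral_mono_on
            (((hG.comp_continuousOn hP'.z_cont).sub
              (hG.comp_continuousOn hP.z_cont)).abs.integrableOn_Icc.mono_set hsub)
            ((hgint.mono_set hsub).const_mul C) measurableSet_Ioc fun s hs => ?_
          have h2 := hlip (z' s) (z s) (hMz' s (hsub hs)) (hMz s (hsub hs))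
          calc |G (z' s) - G (z s)| ≤ C * |z' s - z s| := h2
            _ = C * g s := by rw [hgdef]; simp [abs_sub_comm]
      _ = C * ∫ s in Set.Ioc (0:ℝ) t, g s := MeasureTheory.integral_const_mul C _
  -- main Gronwall inequality
  have hmain : ∀ t ∈ Set.Icc 0 T, g t ≤ (2 * C) * ∫ s in Set.Ioc (0:ℝ) t, g s := by
    intro t ht
    have hint_mono : ∀ s, 0 ≤ s → s ≤ t → (∫ u in Set.Ioc (0:ℝ) s, g u) ≤
        ∫ u in Set.Ioc (0:ℝ) t, g u := by
      intro s hs hst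
      refine MeasureTheory.setIntegral_mono_set
        (hgint.mono_set (Set.Ioc_subset_Icc_self.trans (Set.Icc_subset_Icc le_rfl ht.2)))
        ?_ (HasSubset.Subset.eventuallyLE (Set.Ioc_subset_Ioc le_rfl hst))
      filter_upwards [MeasureTheory.ae_restrict_mem measurableSet_Ioc] with u hu
      exact abs_nonneg _
    have hz := hP.eqn t ht
    have hz' := hP'.eqn t ht
    have hl := hP.l_eq_runMax hy hG ht
    have hl' := hP'.l_eq_runMax hy hG ht
    have hxc : ContinuousOn (fun s => max 0 (-(xinput G y z s))) (Set.Icc 0 t) :=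
      continuousOn_const.sup (((xinput_contOn hy hG hP.z_cont).mono
        (Set.Icc_subset_Icc le_rfl ht.2)).neg)
    have hxc' : ContinuousOn (fun s => max 0 (-(xinput G y z' s))) (Set.Icc 0 t) :=
      continuousOn_const.sup (((xinput_contOn hy hG hP'.z_cont).mono
        (Set.Icc_subset_Icc le_rfl ht.2)).neg)
    have hrun : |runMax (fun s => max 0 (-(xinput G y z s))) t -
        runMax (fun s => max 0 (-(xinput G y z' s))) t| ≤
        C * ∫ s in Set.Ioc (0:ℝ) t, g s := by
      refine runMax_sub_le hxc hxc' ht.1 fun s hs => ?_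
      have h3 : |max 0 (-(xinput G y z s)) - max 0 (-(xinput G y z' s))| ≤
          |xinput G y z s - xinput G y z' s| := by
        have h4 := abs_max_sub_max_le_abs (-(xinput G y z s)) (-(xinput G y z' s)) 0
        rw [max_comm (-(xinput G y z s)) 0, max_comm (-(xinput G y z' s)) 0] at h4
        calc |max 0 (-(xinput G y z s)) - max 0 (-(xinput G y z' s))|
            ≤ |(-(xinput G y z s)) - (-(xinput G y z' s))| := h4
          _ = |xinput G y z s - xinput G y z' s| := by rw [neg_sub_neg, abs_sub_comm]
      refine h3.trans ((hxd s ⟨hs.1, hs.2.trans ht.2⟩).trans ?_)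
      exact mul_le_mul_of_nonneg_left (hint_mono s hs.1 hs.2) hC
    have := hxd t ht
    rw [hgdef]
    have hrw : z t - z' t = (xinput G y z t - xinput G y z' t) +
        (runMax (fun s => max 0 (-(xinput G y z s))) t -
         runMax (fun s => max 0 (-(xinput G y z' s))) t) := by
      rw [hz, hz', hl, hl']; ring
    calc |z t - z' t| ≤ |xinput G y z t - xinput G y z' t| +
          |runMax (fun s => max 0 (-(xinput G y z s))) t -
           runMax (fun s => max 0 (-(xinput G y z' s))) t| := by
          rw [hrw]; exact abs_add_le _ _
      _ ≤ (2 * C) * ∫ s in Set.Ioc (0:ℝ) t, g s := by linarith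
  have hzero : ∀ t ∈ Set.Icc 0 T, g t = 0 :=
    gronwall_zero (by linarith) hgc (fun t _ => abs_nonneg _) hmain
  intro t ht
  have hzz : ∀ s ∈ Set.Icc 0 T, z s = z' s := by
    intro s hs
    have := hzero s hs
    rw [hgdef] at this
    simpa [abs_eq_zero, sub_eq_zero] using this
  have hxeq : xinput G y z t = xinput G y z' t := by
    have : ∫ s in Set.Ioc (0:ℝ) t, G (z s) = ∫ s in Set.Ioc (0:ℝ) t, G (z' s) := by
      refine MeasureTheory.setIntegral_congr_fun measurableSet_Ioc fun s hs => ?_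
      rw [hzz s ⟨hs.1.le, hs.2.trans ht.2⟩]
    simp [xinput, this]
  refine ⟨hzz t ht, ?_⟩
  have h1 := hP.eqn t ht
  have h2 := hP'.eqn t ht
  rw [hzz t ht] at h1
  rw [hxeq] at h1
  linarith

/-! ### Existence via Banach fixed point -/

def clamp (T t : ℝ) : ℝ := max 0 (min t T)

theorem clamp_continuous (T : ℝ) : Continuous (clamp T) :=
  continuous_const.max (continuous_id.min continuous_const)

theorem clamp_mem {T : ℝ} (hT : 0 ≤ T) (t : ℝ) : clamp T t ∈ Set.Icc 0 T :=
  ⟨le_max_left _ _, max_le hT (min_le_right t T)⟩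

theorem clamp_eq {T t : ℝ} (h0 : 0 ≤ t) (hT : t ≤ T) : clamp T t = t := by
  rw [clamp, min_eq_left hT, max_eq_right h0]

theorem clamp_idem {T t : ℝ} (hT : 0 ≤ T) : clamp T (clamp T t) = clamp T t :=
  clamp_eq (clamp_mem hT t).1 (clamp_mem hT t).2

theorem cont_int_Ioc {f : ℝ → ℝ} (hf : Continuous f) :
    Continuous fun t => ∫ s in Set.Ioc (0:ℝ) t, f s := by
  have heq : (fun t => ∫ s in Set.Ioc (0:ℝ) t, f s) =
      (fun r => ∫ s in (0:ℝ)..r, f s) ∘ fun t => max 0 t := by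
    funext t
    rcases le_total 0 t with h | h
    · simp only [Function.comp_apply, max_eq_right h, intervalIntegral.integral_of_le h]
    · simp only [Function.comp_apply, max_eq_left h, intervalIntegral.integral_same,
        Set.Ioc_eq_empty (not_lt.2 h), MeasureTheory.setIntegral_empty]
  rw [heq]
  exact (intervalIntegral.continuous_primitive (fun a b => hf.intervalIntegrable a b) 0).comp
    (continuous_const.max continuous_id)

variable (G y : ℝ → ℝ) (T : ℝ)

theorem xinput_cont_global (hy : Continuous y) (hG : Continuous G) (z : ℝ →ᵇ ℝ) :
    Continuous (xinput G y ⇑z) :=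
  hy.sub (cont_int_Ioc (hG.comp z.continuous))

/-- the regulated map, before clamping. -/
def phiF (z : ℝ →ᵇ ℝ) : ℝ → ℝ := fun t =>
  xinput G y (⇑z) t + runMax (fun s => max 0 (-(xinput G y (⇑z) s))) t

theorem phiF_contOn (hy : Continuous y) (hG : Continuous G) (z : ℝ →ᵇ ℝ) :
    ContinuousOn (phiF G y z) (Set.Ici 0) :=
  (xinput_cont_global G y hy hG z).continuousOn.add
    (runMax_continuousOn (continuous_const.max (xinput_cont_global G y hy hG z).neg))

/-- the regulator operator on bounded continuous functions. -/
def Fop (hy : Continuous y) (hG : Continuous G) (hT : 0 ≤ T) (z : ℝ →ᵇ ℝ) : ℝ →ᵇ ℝ :=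
  BoundedContinuousFunction.ofNormedAddCommGroup
    (fun t => phiF G y z (clamp T t))
    ((phiF_contOn G y hy hG z).comp_continuous (clamp_continuous T)
      fun t => (clamp_mem hT t).1)
    (Classical.choose (isCompact_Icc.exists_bound_of_continuousOn
      ((phiF_contOn G y hy hG z).mono fun u (hu : u ∈ Set.Icc 0 T) => hu.1)))
    (fun t => Classical.choose_spec (isCompact_Icc.exists_bound_of_continuousOn
      ((phiF_contOn G y hy hG z).mono fun u (hu : u ∈ Set.Icc 0 T) => hu.1))
      (clamp T t) (clamp_mem hT t))

theorem Fop_apply (hy : Continuous y) (hG : Continuous G) (hT : 0 ≤ T) (z : ℝ →ᵇ ℝ) (t : ℝ) :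
    Fop G y T hy hG hT z t = phiF G y z (clamp T t) := rfl

theorem Fop_apply' (hy : Continuous y) (hG : Continuous G) (hT : 0 ≤ T) (z : ℝ →ᵇ ℝ)
    {t : ℝ} (ht : t ∈ Set.Icc 0 T) :
    Fop G y T hy hG hT z t = xinput G y (⇑z) t +
      runMax (fun s => max 0 (-(xinput G y (⇑z) s))) t := by
  rw [Fop_apply, clamp_eq ht.1 ht.2, phiF]

theorem Fop_clamp (hy : Continuous y) (hG : Continuous G) (hT : 0 ≤ T) (z : ℝ →ᵇ ℝ) (t : ℝ) :
    Fop G y T hy hG hT z t = Fop G y T hy hG hT z (clamp T t) := by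
  rw [Fop_apply, Fop_apply, clamp_idem hT]

/-- one-step Lipschitz-type estimate for `Fop`. -/
theorem Fop_step {C : ℝ} (hy : Continuous y) (hG : Continuous G) (hT : 0 ≤ T) (hC : 0 ≤ C)
    (hlip : ∀ v w : ℝ, |G v - G w| ≤ C * |v - w|) (a b : ℝ →ᵇ ℝ) {t : ℝ}
    (ht : t ∈ Set.Icc 0 T) :
    |Fop G y T hy hG hT a t - Fop G y T hy hG hT b t| ≤
      2 * C * ∫ s in Set.Ioc (0:ℝ) t, |a s - b s| := by
  have habs : Continuous fun s => |a s - b s| := (a.continuous.sub b.continuous).abs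
  have hGa : Continuous fun s => G (a s) := hG.comp a.continuous
  have hGb : Continuous fun s => G (b s) := hG.comp b.continuous
  have hxd : ∀ s, 0 ≤ s → s ≤ t →
      |xinput G y (⇑a) s - xinput G y (⇑b) s| ≤ C * ∫ u in Set.Ioc (0:ℝ) t, |a u - b u| := by
    intro s hs hst
    have h1 : xinput G y (⇑a) s - xinput G y (⇑b) s
        = ∫ u in Set.Ioc (0:ℝ) s, (G (b u) - G (a u)) := by
      rw [MeasureTheory.integral_sub (hGb.integrableOn_Icc.mono_set Set.Ioc_subset_Icc_self)
        (hGa.integrableOn_Icc.mono_set Set.Ioc_subset_Icc_self)]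
      simp [xinput]
    rw [h1]
    calc |∫ u in Set.Ioc (0:ℝ) s, (G (b u) - G (a u))|
        ≤ ∫ u in Set.Ioc (0:ℝ) s, |G (b u) - G (a u)| :=
          le_trans (le_of_eq (Real.norm_eq_abs _).symm)
            ((MeasureTheory.norm_integral_le_integral_norm _).trans
              (le_of_eq (by simp [Real.norm_eq_abs])))
      _ ≤ ∫ u in Set.Ioc (0:ℝ) s, C * |a u - b u| := by
          refine MeasureTheory.setIntegral_mono_on
            ((hGb.sub hGa).abs.integrableOn_Icc.mono_set Set.Ioc_subset_Icc_self)
            ((habs.integrableOn_Icc.mono_set Set.Ioc_subset_Icc_self).const_mul C)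
            measurableSet_Ioc fun u _ => ?_
          calc |G (b u) - G (a u)| ≤ C * |b u - a u| := hlip _ _
            _ = C * |a u - b u| := by rw [abs_sub_comm]
      _ ≤ C * ∫ u in Set.Ioc (0:ℝ) t, |a u - b u| := by
          rw [← MeasureTheory.integral_const_mul]
          refine MeasureTheory.setIntegral_mono_set
            ((habs.integrableOn_Icc.mono_set Set.Ioc_subset_Icc_self).const_mul C)
            ?_ (HasSubset.Subset.eventuallyLE (Set.Ioc_subset_Ioc le_rfl hst))
          filter_upwards [MeasureTheory.ae_restrict_mem measurableSet_Ioc] with u _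
          positivity
  have hxc : ∀ (c : ℝ →ᵇ ℝ), ContinuousOn (fun s => max 0 (-(xinput G y (⇑c) s)))
      (Set.Icc 0 t) := fun c =>
    continuousOn_const.sup (xinput_cont_global G y hy hG c).continuousOn.neg
  have hrun : |runMax (fun s => max 0 (-(xinput G y (⇑a) s))) t -
      runMax (fun s => max 0 (-(xinput G y (⇑b) s))) t| ≤
      C * ∫ u in Set.Ioc (0:ℝ) t, |a u - b u| := by
    refine runMax_sub_le (hxc a) (hxc b) ht.1 fun s hs => ?_
    have h4 := abs_max_sub_max_le_abs (-(xinput G y (⇑a) s)) (-(xinput G y (⇑b) s)) 0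
    rw [max_comm (-(xinput G y (⇑a) s)) 0, max_comm (-(xinput G y (⇑b) s)) 0] at h4
    refine le_trans (h4.trans (le_of_eq ?_)) (hxd s hs.1 hs.2)
    rw [neg_sub_neg, abs_sub_comm]
  rw [Fop_apply' G y T hy hG hT a ht, Fop_apply' G y T hy hG hT b ht]
  have := hxd t ht.1 le_rfl
  calc |xinput G y (⇑a) t + runMax (fun s => max 0 (-(xinput G y (⇑a) s))) t -
        (xinput G y (⇑b) t + runMax (fun s => max 0 (-(xinput G y (⇑b) s))) t)|
      ≤ |xinput G y (⇑a) t - xinput G y (⇑b) t| +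
        |runMax (fun s => max 0 (-(xinput G y (⇑a) s))) t -
         runMax (fun s => max 0 (-(xinput G y (⇑b) s))) t| := by
        have h5 := abs_add_le (xinput G y (⇑a) t - xinput G y (⇑b) t)
          (runMax (fun s => max 0 (-(xinput G y (⇑a) s))) t -
           runMax (fun s => max 0 (-(xinput G y (⇑b) s))) t)
        calc _ = |(xinput G y (⇑a) t - xinput G y (⇑b) t) +
            (runMax (fun s => max 0 (-(xinput G y (⇑a) s))) t -
             runMax (fun s => max 0 (-(xinput G y (⇑b) s))) t)| := by ring_nf
          _ ≤ _ := h5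
    _ ≤ 2 * C * ∫ s in Set.Ioc (0:ℝ) t, |a s - b s| := by linarith

/-- iterated Picard estimate for `Fop`. -/
theorem Fop_iterate_est {C : ℝ} (hy : Continuous y) (hG : Continuous G) (hT : 0 ≤ T) (hC : 0 ≤ C)
    (hlip : ∀ v w : ℝ, |G v - G w| ≤ C * |v - w|) :
    ∀ n : ℕ, ∀ a b : ℝ →ᵇ ℝ, ∀ t ∈ Set.Icc 0 T,
      |(Fop G y T hy hG hT)^[n] a t - (Fop G y T hy hG hT)^[n] b t| ≤
        dist a b * ((2 * C) ^ n * t ^ n / (n.factorial : ℝ)) := by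
  intro n
  induction n with
  | zero =>
    intro a b t _
    simpa [Real.dist_eq] using BoundedContinuousFunction.dist_coe_le_dist (f := a) (g := b) t
  | succ n ih =>
    intro a b t ht
    set A := (Fop G y T hy hG hT)^[n] a with hA
    set B := (Fop G y T hy hG hT)^[n] b with hB
    have hstep : |(Fop G y T hy hG hT) A t - (Fop G y T hy hG hT) B t| ≤
        2 * C * ∫ s in Set.Ioc (0:ℝ) t, |A s - B s| :=
      Fop_step G y T hy hG hT hC hlip A B ht
    have habs : Continuous fun s => |A s - B s| := (A.continuous.sub B.continuous).abs
    have hfact : (0:ℝ) < (n.factorial : ℝ) := by positivity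
    have hmono : ∫ s in Set.Ioc (0:ℝ) t, |A s - B s| ≤
        ∫ s in Set.Ioc (0:ℝ) t, (dist a b * (2 * C) ^ n / (n.factorial : ℝ)) * s ^ n := by
      refine MeasureTheory.setIntegral_mono_on
        (habs.integrableOn_Icc.mono_set Set.Ioc_subset_Icc_self)
        ((Continuous.integrableOn_Icc (by continuity)).mono_set Set.Ioc_subset_Icc_self)
        measurableSet_Ioc fun s hs => ?_
      have := ih a b s ⟨hs.1.le, hs.2.trans ht.2⟩
      calc |A s - B s| ≤ dist a b * ((2 * C) ^ n * s ^ n / (n.factorial : ℝ)) := this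
        _ = (dist a b * (2 * C) ^ n / (n.factorial : ℝ)) * s ^ n := by ring
    have hcomp : ∫ s in Set.Ioc (0:ℝ) t, (dist a b * (2 * C) ^ n / (n.factorial : ℝ)) * s ^ n =
        (dist a b * (2 * C) ^ n / (n.factorial : ℝ)) * (t ^ (n + 1) / (n + 1)) := by
      rw [MeasureTheory.integral_const_mul, ← intervalIntegral.integral_of_le ht.1, integral_pow]
      norm_num
    rw [Function.iterate_succ_apply', Function.iterate_succ_apply', ← hA, ← hB]
    refine hstep.trans ?_
    have h2 : 2 * C * ∫ s in Set.Ioc (0:ℝ) t, |A s - B s| ≤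
        2 * C * ((dist a b * (2 * C) ^ n / (n.factorial : ℝ)) * (t ^ (n + 1) / (n + 1))) := by
      rw [← hcomp]
      exact mul_le_mul_of_nonneg_left hmono (by positivity)
    refine h2.trans (le_of_eq ?_)
    rw [Nat.factorial_succ]
    have hn1 : ((n:ℝ) + 1) ≠ 0 := by positivity
    push_cast
    field_simp
    ring

/-- existence of a solution for a globally Lipschitz nonnegative drift. -/
theorem exists_preSol_trunc {C : ℝ} (hy : Continuous y) (hG : Continuous G) (hT : 0 ≤ T)
    (hC : 0 ≤ C) (hlip : ∀ v w : ℝ, |G v - G w| ≤ C * |v - w|) (hy0 : 0 ≤ y 0) :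
    ∃ z l : ℝ → ℝ, Continuous z ∧ Continuous l ∧ PreSol G y T z l := by
  set F := Fop G y T hy hG hT with hF
  -- choose `n` making the iterate a contraction
  have hq : Tendsto (fun n : ℕ => (2 * C * T) ^ n / (n.factorial : ℝ)) atTop (𝓝 0) :=
    FloorSemiring.tendsto_pow_div_factorial_atTop (2 * C * T)
  have hev : ∀ᶠ n : ℕ in atTop, (2 * C * T) ^ n / (n.factorial : ℝ) < 1 :=
    hq.eventually_lt_const one_pos
  obtain ⟨n, hn1, hnq⟩ : ∃ n : ℕ, 1 ≤ n ∧ (2 * C * T) ^ n / (n.factorial : ℝ) < 1 := by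
    obtain ⟨n, hn⟩ := ((eventually_ge_atTop 1).and hev).exists
    exact ⟨n, hn.1, hn.2⟩
  set q : ℝ := (2 * C * T) ^ n / (n.factorial : ℝ) with hqdef
  have hq0 : 0 ≤ q := by positivity
  have hcontr : ContractingWith q.toNNReal (F^[n]) := by
    constructor
    · simpa [Real.coe_toNNReal q hq0] using hnq
    · refine LipschitzWith.of_dist_le_mul fun a b => ?_
      rw [Real.coe_toNNReal q hq0]
      refine (BoundedContinuousFunction.dist_le (by positivity)).2 fun t => ?_
      obtain ⟨m, rfl⟩ : ∃ m, n = m + 1 := ⟨n - 1, by omega⟩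
      rw [Real.dist_eq, Function.iterate_succ_apply', Function.iterate_succ_apply']
      rw [show (F ((F^[m]) a)) t = (F ((F^[m]) a)) (clamp T t) from Fop_clamp G y T hy hG hT _ t,
        show (F ((F^[m]) b)) t = (F ((F^[m]) b)) (clamp T t) from Fop_clamp G y T hy hG hT _ t]
      have hkey := Fop_iterate_est G y T hy hG hT hC hlip (m + 1) a b (clamp T t)
        (clamp_mem hT t)
      rw [Function.iterate_succ_apply', Function.iterate_succ_apply'] at hkey
      refine hkey.trans ?_
      rw [mul_comm q (dist a b)]
      refine mul_le_mul_of_nonneg_left ?_ dist_nonneg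
      have hfac : (0:ℝ) < (((m+1).factorial : ℕ) : ℝ) := by positivity
      rw [hqdef, ← mul_pow]
      refine (div_le_div_iff_of_pos_right hfac).2 ?_
      refine pow_le_pow_left₀ (mul_nonneg (by positivity) (clamp_mem hT t).1) ?_ _
      nlinarith [(clamp_mem hT t).1, (clamp_mem hT t).2]
  set zs := ContractingWith.fixedPoint (F^[n]) hcontr with hzs
  have hfix : Function.IsFixedPt F zs := hcontr.isFixedPt_fixedPoint_iterate
  set x : ℝ → ℝ := xinput G y (⇑zs) with hx
  set np : ℝ → ℝ := fun s => max 0 (-(x s)) with hnp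
  have hxc : Continuous x := xinput_cont_global G y hy hG zs
  have hnpc : Continuous np := continuous_const.max hxc.neg
  have hnp0 : np 0 = 0 := by
    have hx0 : x 0 = y 0 := by simp [hx, xinput, Set.Ioc_self]
    simp [hnp, hx0, max_eq_left (neg_nonpos.2 hy0)]
  have hnpnn : ∀ s, 0 ≤ np s := fun s => le_max_left _ _
  have hzeq : ∀ t ∈ Set.Icc 0 T, zs t = x t + runMax np t := by
    intro t ht
    conv_lhs => rw [← hfix]
    exact Fop_apply' G y T hy hG hT zs ht
  set l : ℝ → ℝ := fun t => runMax np (clamp T t) with hl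
  have hlc : Continuous l :=
    (runMax_continuousOn hnpc).comp_continuous (clamp_continuous T)
      fun t => (clamp_mem hT t).1
  refine ⟨⇑zs, l, zs.continuous, hlc, ?_⟩
  have hleq : ∀ t ∈ Set.Icc 0 T, l t = runMax np t := by
    intro t ht; rw [hl]; simp only []; rw [clamp_eq ht.1 ht.2]
  constructor
  · exact zs.continuous.continuousOn
  · exact hlc.continuousOn
  · intro t ht
    rw [hzeq t ht]
    have h1 : np t ≤ runMax np t := le_runMax hnpc.continuousOn ⟨ht.1, le_rfl⟩
    have h2 : -(x t) ≤ np t := le_max_right _ _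
    linarith
  · intro t ht
    rw [hzeq t ht, hleq t ht]
  · intro a ha b hb hab
    rw [hleq a ha, hleq b hb]
    exact runMax_mono hnpc.continuousOn ha.1 hab
  · have : clamp T 0 = 0 := clamp_eq le_rfl hT
    rw [hl]; simp only []; rw [this, runMax_zero trivial, hnp0]
  · intro a b h0a hab hbT hpos
    have hbb : (0:ℝ) ≤ b := h0a.trans hab
    rw [hleq a ⟨h0a, hab.trans hbT⟩, hleq b ⟨hbb, hbT⟩]
    refine le_antisymm (runMax_mono hnpc.continuousOn h0a hab) ?_
    obtain ⟨s, hs, hseq⟩ := runMax_exists hnpc.continuousOn hbb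
    rcases le_or_gt s a with hsa | hsa
    · rw [hseq]
      exact le_runMax hnpc.continuousOn ⟨hs.1, hsa⟩
    · rcases le_or_gt (np s) 0 with hnps | hnps
      · rw [hseq]
        exact hnps.trans ((hnpnn 0).trans (le_runMax hnpc.continuousOn ⟨le_rfl, h0a⟩))
      · exfalso
        have hsT : s ∈ Set.Icc 0 T := ⟨hs.1, hs.2.trans hbT⟩
        have hzs' : zs s = x s + runMax np s := hzeq s hsT
        have hr1 : runMax np s ≤ runMax np b := runMax_mono hnpc.continuousOn hs.1 hs.2
        have hr2 : np s ≤ runMax np s := le_runMax hnpc.continuousOn ⟨hs.1, le_rfl⟩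
        have hr3 : runMax np s = np s := le_antisymm (by rw [← hseq] at *; linarith) hr2
        have hnpval : np s = -(x s) := by
          rw [hnp]; simp only []
          exact max_eq_right (by
            by_contra hcon
            push_neg at hcon
            rw [hnp] at hnps; simp only [] at hnps
            rw [max_eq_left (le_of_lt hcon)] at hnps
            exact lt_irrefl 0 hnps)
        have : zs s = 0 := by rw [hzs', hr3, hnpval]; ring
        have := hpos s ⟨hsa.le, hs.2⟩
        linarith

theorem PreSol.mono {G y z l : ℝ → ℝ} {T T' : ℝ} (hP : PreSol G y T z l) (hT' : T' ≤ T) :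
    PreSol G y T' z l :=
  ⟨hP.z_cont.mono (Set.Icc_subset_Icc le_rfl hT'),
   hP.l_cont.mono (Set.Icc_subset_Icc le_rfl hT'),
   fun t ht => hP.z_nonneg t ⟨ht.1, ht.2.trans hT'⟩,
   fun t ht => hP.eqn t ⟨ht.1, ht.2.trans hT'⟩,
   hP.l_mono.mono (Set.Icc_subset_Icc le_rfl hT'),
   hP.l_zero,
   fun a b h0a hab hbT' hp => hP.l_flat a b h0a hab (hbT'.trans hT') hp⟩

end RegCore

noncomputable section RegFinal

variable {h y : ℝ → ℝ}

/-- the truncated drift. -/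
def Htr (h : ℝ → ℝ) (M : ℝ) : ℝ → ℝ := fun v => Hfun h (min v M)

theorem Htr_cont (hc : ContinuousOn h (Set.Ici 0)) (M : ℝ) : Continuous (Htr h M) :=
  (Hfun_cont hc).comp (continuous_id.min continuous_const)

theorem Htr_nonneg (hn : ∀ u, 0 ≤ u → 0 ≤ h u) (M v : ℝ) : 0 ≤ Htr h M v :=
  Hfun_nonneg hn _

theorem Htr_eq {M v : ℝ} (hv : v ≤ M) : Htr h M v = Hfun h v := by
  rw [Htr]; simp [min_eq_left hv]

theorem Htr_lip (hc : ContinuousOn h (Set.Ici 0)) (hn : ∀ u, 0 ≤ u → 0 ≤ h u) {M : ℝ}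
    (hM : 0 ≤ M) : ∀ v w : ℝ, |Htr h M v - Htr h M w| ≤ runMax (hpos h) M * |v - w| := by
  intro v w
  have hC0 : 0 ≤ runMax (hpos h) M :=
    (hpos_nonneg hn 0).trans (le_runMax (hpos_cont hc).continuousOn ⟨le_rfl, hM⟩)
  have h1 := Hfun_lip hc hn hM (min_le_right v M) (min_le_right w M)
  refine h1.trans (mul_le_mul_of_nonneg_left ?_ hC0)
  have h3 := abs_max_sub_max_le_abs (-v) (-w) (-M)
  rw [max_neg_neg, max_neg_neg, neg_sub_neg, neg_sub_neg] at h3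
  calc |min v M - min w M| = |min w M - min v M| := abs_sub_comm _ _
    _ ≤ |w - v| := h3
    _ = |v - w| := abs_sub_comm _ _

/-- existence of a solution for the true drift `Hfun h` on `[0, T]`. -/
theorem exists_preSol_H (hc : ContinuousOn h (Set.Ici 0)) (hn : ∀ u, 0 ≤ u → 0 ≤ h u)
    (hy : Continuous y) (hy0 : 0 ≤ y 0) {T : ℝ} (hT : 0 ≤ T) :
    ∃ z l : ℝ → ℝ, Continuous z ∧ Continuous l ∧ PreSol (Hfun h) y T z l := by
  set M := runMax (zup y) T with hM
  have hzupc : ContinuousOn (zup y) (Set.Icc 0 T) := (zup_contOn hy).mono fun u hu => hu.1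
  have hM0 : 0 ≤ M := (zup_nonneg hy le_rfl).trans (le_runMax hzupc ⟨le_rfl, hT⟩)
  have hMb : ∀ t ∈ Set.Icc 0 T, zup y t ≤ M := fun t ht => le_runMax hzupc ht
  have hC0 : 0 ≤ runMax (hpos h) M :=
    (hpos_nonneg hn 0).trans (le_runMax (hpos_cont hc).continuousOn ⟨le_rfl, hM0⟩)
  obtain ⟨z, l, hzc, hlc, hP⟩ := exists_preSol_trunc (Htr h M) y T hy (Htr_cont hc M) hT
    hC0 (Htr_lip hc hn hM0) hy0
  have hcomp := hP.le_zup hy (Htr_cont hc M) (Htr_nonneg hn M)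
  have hbM : ∀ t ∈ Set.Icc 0 T, z t ≤ M := fun t ht => (hcomp t ht).trans (hMb t ht)
  refine ⟨z, l, hzc, hlc, ?_⟩
  have hxeq : ∀ t ∈ Set.Icc 0 T, xinput (Htr h M) y z t = xinput (Hfun h) y z t := by
    intro t ht
    simp only [xinput]
    congr 1
    refine MeasureTheory.setIntegral_congr_fun measurableSet_Ioc fun s hs => ?_
    exact Htr_eq (hbM s ⟨hs.1.le, hs.2.trans ht.2⟩)
  exact ⟨hP.z_cont, hP.l_cont, hP.z_nonneg,
    fun t ht => by rw [← hxeq t ht]; exact hP.eqn t ht,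
    hP.l_mono, hP.l_zero, hP.l_flat⟩

/-- uniqueness on `[0, T]` for the true drift. -/
theorem preSol_unique_H (hc : ContinuousOn h (Set.Ici 0)) (hn : ∀ u, 0 ≤ u → 0 ≤ h u)
    (hy : Continuous y) {T : ℝ} (hT : 0 ≤ T) {z l z' l' : ℝ → ℝ}
    (hP : PreSol (Hfun h) y T z l) (hP' : PreSol (Hfun h) y T z' l') :
    ∀ t ∈ Set.Icc 0 T, z t = z' t ∧ l t = l' t := by
  set M := runMax (zup y) T with hM
  have hzupc : ContinuousOn (zup y) (Set.Icc 0 T) := (zup_contOn hy).mono fun u hu => hu.1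
  have hM0 : 0 ≤ M := (zup_nonneg hy le_rfl).trans (le_runMax hzupc ⟨le_rfl, hT⟩)
  have hMb : ∀ t ∈ Set.Icc 0 T, zup y t ≤ M := fun t ht => le_runMax hzupc ht
  have hC0 : 0 ≤ runMax (hpos h) M :=
    (hpos_nonneg hn 0).trans (le_runMax (hpos_cont hc).continuousOn ⟨le_rfl, hM0⟩)
  have hbz : ∀ t ∈ Set.Icc 0 T, z t ≤ M := fun t ht =>
    (hP.le_zup hy (Hfun_cont hc) (Hfun_nonneg hn) t ht).trans (hMb t ht)
  have hbz' : ∀ t ∈ Set.Icc 0 T, z' t ≤ M := fun t ht =>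
    (hP'.le_zup hy (Hfun_cont hc) (Hfun_nonneg hn) t ht).trans (hMb t ht)
  exact preSol_unique hy (Hfun_cont hc) hC0 (fun v w hv hw => Hfun_lip hc hn hM0 hv hw)
    hP hP' hbz hbz'

/-- bridge from the problem statement to `PreSol`. -/
theorem isReg_to_preSol {z l : ℝ → ℝ} (hsol : IsRegulatorSolution h y z l) (T : ℝ) :
    PreSol (Hfun h) (fun t => y (max 0 t)) T z l := by
  refine ⟨hsol.z_cont.mono fun u hu => hu.1, hsol.l_cont.mono fun u hu => hu.1,
    fun t ht => hsol.z_nonneg t ht.1, ?_, ?_, hsol.l_zero,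
    fun a b h0a hab _ hp => hsol.l_flat a b h0a hab hp⟩
  · intro t ht
    have heq := hsol.eqn t ht.1
    have hy0t : y (max 0 t) = y t := by rw [max_eq_right ht.1]
    have hint : ∫ s in Set.Ioc (0:ℝ) t, (∫ u in Set.Ioc (0:ℝ) (z s), h u)
        = ∫ s in Set.Ioc (0:ℝ) t, Hfun h (z s) := by
      refine MeasureTheory.setIntegral_congr_fun measurableSet_Ioc fun s hs => ?_
      exact inner_integral_eq (hsol.z_nonneg s hs.1.le)
    rw [heq, xinput, hy0t, hint]
  · intro a ha b hb hab
    exact hsol.l_mono ha.1 hb.1 hab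

end RegFinal

/-- existence and uniqueness of the solution of the one-sided nonlinear
generalized regulator problem for a continuous hazard function `h` and continuous
input `y` with `y(0) ≥ 0` (uniqueness as functions on `[0,∞)`). -/
theorem regulator_exists_unique (h y : ℝ → ℝ)
    (h_cont : ContinuousOn h (Set.Ici 0))
    (h_nonneg : ∀ u, 0 ≤ u → 0 ≤ h u)
    (y_cont : ContinuousOn y (Set.Ici 0))
    (hy0 : 0 ≤ y 0) :
    ∃ z l : ℝ → ℝ, IsRegulatorSolution h y z l ∧
      ∀ z' l' : ℝ → ℝ, IsRegulatorSolution h y z' l' →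
        ∀ t, 0 ≤ t → z' t = z t ∧ l' t = l t := by
  have hy0c : Continuous (fun t : ℝ => y (max 0 t)) :=
    y_cont.comp_continuous (continuous_const.max continuous_id) fun t => le_max_left 0 t
  have hy0v : ∀ t : ℝ, 0 ≤ t → y (max 0 t) = y t := fun t ht => by rw [max_eq_right ht]
  have hy00 : 0 ≤ (fun t : ℝ => y (max 0 t)) 0 := by
    simpa using hy0
  have hex : ∀ n : ℕ, ∃ zl : (ℝ → ℝ) × (ℝ → ℝ), Continuous zl.1 ∧ Continuous zl.2 ∧
      PreSol (Hfun h) (fun t : ℝ => y (max 0 t)) (n:ℝ) zl.1 zl.2 := by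
    intro n
    obtain ⟨z, l, hzc, hlc, hP⟩ := exists_preSol_H h_cont h_nonneg hy0c hy00 (Nat.cast_nonneg n)
    exact ⟨(z, l), hzc, hlc, hP⟩
  choose ZL hZc hLc hZP using hex
  have hNt : ∀ t : ℝ, 0 ≤ t → t ≤ (Nat.ceil (max 0 t) : ℝ) := fun t _ =>
    (le_max_right 0 t).trans (Nat.le_ceil _)
  set N : ℝ → ℕ := fun t => Nat.ceil (max 0 t) with hN
  set z : ℝ → ℝ := fun t => (ZL (N t)).1 t with hz
  set l : ℝ → ℝ := fun t => (ZL (N t)).2 t with hl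
  have hcons : ∀ (m n : ℕ) (t : ℝ), 0 ≤ t → t ≤ (m:ℝ) → t ≤ (n:ℝ) →
      (ZL m).1 t = (ZL n).1 t ∧ (ZL m).2 t = (ZL n).2 t := by
    intro m n t h0 hm hn2
    rcases le_total (m:ℝ) (n:ℝ) with hmn | hmn
    · exact preSol_unique_H h_cont h_nonneg hy0c (Nat.cast_nonneg m) (hZP m)
        ((hZP n).mono hmn) t ⟨h0, hm⟩
    · have := preSol_unique_H h_cont h_nonneg hy0c (Nat.cast_nonneg n) (hZP n)
        ((hZP m).mono hmn) t ⟨h0, hn2⟩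
      exact ⟨this.1.symm, this.2.symm⟩
  have hzag : ∀ (n : ℕ) (t : ℝ), 0 ≤ t → t ≤ (n:ℝ) →
      z t = (ZL n).1 t ∧ l t = (ZL n).2 t := by
    intro n t h0 hn2
    exact hcons (N t) n t h0 (hNt t h0) hn2
  have hsol : IsRegulatorSolution h y z l := by
    refine ⟨?_, ?_, ?_, ?_, ?_, ?_, ?_⟩
    · -- z_cont
      intro t0 ht0
      have ht0' : (0:ℝ) ≤ t0 := ht0
      have ht0n : t0 < ((N t0 + 1 : ℕ) : ℝ) := by
        have := hNt t0 ht0'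
        push_cast
        linarith
      have hev : ∀ᶠ s in nhdsWithin t0 (Set.Ici 0), z s = (ZL (N t0 + 1)).1 s := by
        filter_upwards [nhdsWithin_le_nhds (Iio_mem_nhds ht0n), self_mem_nhdsWithin]
          with s hs1 hs2
        exact (hzag (N t0 + 1) s hs2 (le_of_lt hs1)).1
      exact ((hZc (N t0 + 1)).continuousAt.continuousWithinAt).congr_of_eventuallyEq hev
        (hzag (N t0 + 1) t0 ht0' ht0n.le).1
    · -- l_cont
      intro t0 ht0
      have ht0' : (0:ℝ) ≤ t0 := ht0
      have ht0n : t0 < ((N t0 + 1 : ℕ) : ℝ) := by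
        have := hNt t0 ht0'
        push_cast
        linarith
      have hev : ∀ᶠ s in nhdsWithin t0 (Set.Ici 0), l s = (ZL (N t0 + 1)).2 s := by
        filter_upwards [nhdsWithin_le_nhds (Iio_mem_nhds ht0n), self_mem_nhdsWithin]
          with s hs1 hs2
        exact (hzag (N t0 + 1) s hs2 (le_of_lt hs1)).2
      exact ((hLc (N t0 + 1)).continuousAt.continuousWithinAt).congr_of_eventuallyEq hev
        (hzag (N t0 + 1) t0 ht0' ht0n.le).2
    · -- z_nonneg
      intro t ht
      rw [(hzag (N t) t ht (hNt t ht)).1]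
      exact (hZP (N t)).z_nonneg t ⟨ht, hNt t ht⟩
    · -- eqn
      intro t ht
      have h1 := (hZP (N t)).eqn t ⟨ht, hNt t ht⟩
      have hint : ∫ s in Set.Ioc (0:ℝ) t, Hfun h ((ZL (N t)).1 s)
          = ∫ s in Set.Ioc (0:ℝ) t, ∫ u in Set.Ioc (0:ℝ) (z s), h u := by
        refine MeasureTheory.setIntegral_congr_fun measurableSet_Ioc fun s hs => ?_
        have hs0 : (0:ℝ) ≤ s := hs.1.le
        have hsn : s ≤ ((N t : ℕ) : ℝ) := hs.2.trans (hNt t ht)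
        have hzs := (hzag (N t) s hs0 hsn).1
        have hnn : 0 ≤ z s := by
          rw [hzs]; exact (hZP (N t)).z_nonneg s ⟨hs0, hsn⟩
        rw [← hzs, inner_integral_eq hnn]
      calc z t = (ZL (N t)).1 t := (hzag (N t) t ht (hNt t ht)).1
        _ = xinput (Hfun h) (fun t : ℝ => y (max 0 t)) (ZL (N t)).1 t + (ZL (N t)).2 t := h1
        _ = y t - (∫ s in Set.Ioc (0:ℝ) t, ∫ u in Set.Ioc (0:ℝ) (z s), h u) + l t := by
            rw [xinput, hint, hy0v t ht, (hzag (N t) t ht (hNt t ht)).2]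
    · -- l_mono
      intro a ha b hb hab
      have hbn := hNt b hb
      rw [(hzag (N b) a ha (hab.trans hbn)).2, (hzag (N b) b hb hbn).2]
      exact (hZP (N b)).l_mono ⟨ha, hab.trans hbn⟩ ⟨hb, hbn⟩ hab
    · -- l_zero
      show (ZL (N 0)).2 0 = 0
      exact (hZP (N 0)).l_zero
    · -- l_flat
      intro a b h0a hab hp
      have hb0 : (0:ℝ) ≤ b := h0a.trans hab
      have hbn := hNt b hb0
      rw [(hzag (N b) a h0a (hab.trans hbn)).2, (hzag (N b) b hb0 hbn).2]
      refine (hZP (N b)).l_flat a b h0a hab hbn fun t ht' => ?_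
      have h0t : (0:ℝ) ≤ t := h0a.trans ht'.1
      rw [← (hzag (N b) t h0t (ht'.2.trans hbn)).1]
      exact hp t ht'
  refine ⟨z, l, hsol, ?_⟩
  intro z' l' hsol' t ht
  have hP' := isReg_to_preSol hsol' t
  have hP := isReg_to_preSol hsol t
  exact preSol_unique_H h_cont h_nonneg hy0c ht hP' hP t ⟨ht, le_rfl⟩
end
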